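/- Let U be a Ptolemy diagram of the ∞-gon P_∞ and D ⊆ I(U) a subset which is locally finite or has a fountain. Then the D-mutation μ_D(U) of U is again a Ptolemy diagram of P_∞. -/

import Mathlib

namespace InfinityGonPtolemy

/-- `{a,b}` (with `a < b`) is an arc of the ∞-gon. -/
def IsArc (a b : ℤ) : Prop := a + 2 ≤ b

/-- `{a,b}` (with `a < b`) is an edge of the ∞-gon. -/
def IsEdge (a b : ℤ) : Prop := b = a + 1

/-- Two arcs, given as ordered pairs, cross each other. -/
def Cross (p q : ℤ × ℤ) : Prop :=
  (p.1 < q.1 ∧ q.1 < p.2 ∧ p.2 < q.2) ∨ (q.1 < p.1 ∧ p.1 < q.2 ∧ q.2 < p.2)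

/-- `n` is a left fountain of `A`. -/
def IsLeftFountain (A : Set (ℤ × ℤ)) (n : ℤ) : Prop :=
  {m : ℤ | (m, n) ∈ A}.Infinite

/-- `n` is a right fountain of `A`. -/
def IsRightFountain (A : Set (ℤ × ℤ)) (n : ℤ) : Prop :=
  {p : ℤ | (n, p) ∈ A}.Infinite

/-- `A` has a fountain. -/
def HasFountain (A : Set (ℤ × ℤ)) : Prop :=
  ∃ n : ℤ, IsLeftFountain A n ∧ IsRightFountain A n

/-- `A` is locally finite: only finitely many arcs of `A` end in any given integer. -/
def LocallyFinite (A : Set (ℤ × ℤ)) : Prop :=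
  ∀ n : ℤ, {m : ℤ | (m, n) ∈ A ∨ (n, m) ∈ A}.Finite

/-- `U` is a Ptolemy diagram of the ∞-gon: (i) whenever two arcs `{a,c}` and `{b,d}` of
`U` cross, those of `{a,b}`, `{b,c}`, `{c,d}`, `{a,d}` which are arcs belong to `U`;
(ii) every right fountain of `U` is a fountain. -/
def IsPtolemy (U : Set (ℤ × ℤ)) : Prop :=
  (∀ p ∈ U, IsArc p.1 p.2) ∧
  (∀ a b c d : ℤ, (a, c) ∈ U → (b, d) ∈ U → a < b → b < c → c < d →
    (IsArc a b → (a, b) ∈ U) ∧ (IsArc b c → (b, c) ∈ U) ∧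
    (IsArc c d → (c, d) ∈ U) ∧ (IsArc a d → (a, d) ∈ U)) ∧
  (∀ n : ℤ, IsRightFountain U n → IsLeftFountain U n)

/-- `I(U)`: the arcs of `U` crossing no arc of `U`. -/
def core (U : Set (ℤ × ℤ)) : Set (ℤ × ℤ) :=
  {p | p ∈ U ∧ ∀ q ∈ U, ¬ Cross p q}

/-- `{a,b}` (with `a < b`, both in `S`) is a boundary pair of the finite cell `S`:
either `a` and `b` are consecutive in `S`, or `a = min S` and `b = max S`. -/
def CellBoundaryPair (S : Finset ℤ) (a b : ℤ) : Prop :=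
  a ∈ S ∧ b ∈ S ∧ a < b ∧
    ((∀ c ∈ S, ¬(a < c ∧ c < b)) ∨ (∀ c ∈ S, a ≤ c ∧ c ≤ b))

/-- `S` is a finite `D`-cell. -/
def IsFiniteCell (D : Set (ℤ × ℤ)) (S : Finset ℤ) : Prop :=
  S.Nonempty ∧
  (∀ a b : ℤ, CellBoundaryPair S a b → (IsEdge a b ∨ (a, b) ∈ D)) ∧
  (∀ a ∈ S, ∀ b ∈ S, a < b → ¬ CellBoundaryPair S a b → (a, b) ∉ D)

/-- `{a,b}` lies in the interior of the finite cell `S`. -/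
def FiniteInterior (S : Finset ℤ) (a b : ℤ) : Prop :=
  a ∈ S ∧ b ∈ S ∧ a < b ∧ ¬ CellBoundaryPair S a b

/-- The strictly increasing enumeration `f` is an infinite `D`-cell: consecutive pairs
are edges or elements of `D`, and no other pair of its vertices belongs to `D`. -/
def IsInfiniteCell (D : Set (ℤ × ℤ)) (f : ℤ → ℤ) : Prop :=
  StrictMono f ∧
  (∀ t : ℤ, IsEdge (f t) (f (t + 1)) ∨ (f t, f (t + 1)) ∈ D) ∧
  (∀ k l : ℤ, k + 2 ≤ l → (f k, f l) ∉ D)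

/-- `{a,b}` lies in the interior of the infinite cell `f`. -/
def InfiniteInterior (f : ℤ → ℤ) (a b : ℤ) : Prop :=
  ∃ k l : ℤ, k + 2 ≤ l ∧ a = f k ∧ b = f l

/-- The cyclic predecessor of `x` in the finite cell `S`: the largest element of `S`
below `x`, or `max S` if `x = min S`. -/
noncomputable def cellPred (S : Finset ℤ) (x : ℤ) : ℤ :=
  if h : (S.filter (fun c => c < x)).Nonempty then (S.filter (fun c => c < x)).max' h
  else if h2 : S.Nonempty then S.max' h2 else 0

/-- The ordered pair `{x,y}`. -/
def ordPair (x y : ℤ) : ℤ × ℤ := (min x y, max x y)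

/-- The `D`-mutation of `U`: keep the arcs of `D`, replace every arc of `U` in the
interior of a finite `D`-cell by the arc on the cyclic predecessors of its endpoints,
and every arc `{f k, f l}` of `U` in the interior of an infinite `D`-cell `f` by
`{f (k-1), f (l-1)}`. -/
def mutation (U D : Set (ℤ × ℤ)) : Set (ℤ × ℤ) :=
  D ∪ {p | ∃ S : Finset ℤ, IsFiniteCell D S ∧ ∃ a b : ℤ, (a, b) ∈ U ∧
        FiniteInterior S a b ∧ p = ordPair (cellPred S a) (cellPred S b)}
    ∪ {p | ∃ f : ℤ → ℤ, IsInfiniteCell D f ∧ ∃ k l : ℤ, k + 2 ≤ l ∧ (f k, f l) ∈ U ∧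
        p = (f (k - 1), f (l - 1))}

/-! ### Auxiliary: next and previous elements of a set of integers -/

open Classical in
noncomputable def nxt (C : Set ℤ) (v : ℤ) : ℤ :=
  if h : ∃ w, w ∈ C ∧ v < w then
    Classical.choose (Int.exists_least_of_bdd (P := fun w => w ∈ C ∧ v < w)
      ⟨v, fun _ hz => le_of_lt hz.2⟩ h)
  else if h2 : ∃ w, w ∈ C ∧ ∀ u ∈ C, w ≤ u then Classical.choose h2 else v

open Classical in
noncomputable def prv (C : Set ℤ) (v : ℤ) : ℤ :=
  if h : ∃ w, w ∈ C ∧ w < v then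
    Classical.choose (Int.exists_greatest_of_bdd (P := fun w => w ∈ C ∧ w < v)
      ⟨v, fun _ hz => le_of_lt hz.2⟩ h)
  else if h2 : ∃ w, w ∈ C ∧ ∀ u ∈ C, u ≤ w then Classical.choose h2 else v

lemma nxt_spec {C : Set ℤ} {v : ℤ} (h : ∃ w, w ∈ C ∧ v < w) :
    nxt C v ∈ C ∧ v < nxt C v ∧ ∀ u ∈ C, v < u → nxt C v ≤ u := by
  have hch := Classical.choose_spec (Int.exists_least_of_bdd (P := fun w => w ∈ C ∧ v < w)
      ⟨v, fun _ hz => le_of_lt hz.2⟩ h)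
  rw [nxt, dif_pos h]
  exact ⟨hch.1.1, hch.1.2, fun u hu hvu => hch.2 u ⟨hu, hvu⟩⟩

lemma prv_spec {C : Set ℤ} {v : ℤ} (h : ∃ w, w ∈ C ∧ w < v) :
    prv C v ∈ C ∧ prv C v < v ∧ ∀ u ∈ C, u < v → u ≤ prv C v := by
  have hch := Classical.choose_spec (Int.exists_greatest_of_bdd (P := fun w => w ∈ C ∧ w < v)
      ⟨v, fun _ hz => le_of_lt hz.2⟩ h)
  rw [prv, dif_pos h]
  exact ⟨hch.1.1, hch.1.2, fun u hu hvu => hch.2 u ⟨hu, hvu⟩⟩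

lemma nxt_wrap {C : Set ℤ} {v m : ℤ} (h : ¬ ∃ w, w ∈ C ∧ v < w)
    (hm : m ∈ C ∧ ∀ u ∈ C, m ≤ u) : nxt C v = m := by
  have h2 : ∃ w, w ∈ C ∧ ∀ u ∈ C, w ≤ u := ⟨m, hm⟩
  have hch := Classical.choose_spec h2
  rw [nxt, dif_neg h, dif_pos h2]
  exact le_antisymm (hch.2 m hm.1) (hm.2 _ hch.1)

lemma prv_wrap {C : Set ℤ} {v M : ℤ} (h : ¬ ∃ w, w ∈ C ∧ w < v)
    (hM : M ∈ C ∧ ∀ u ∈ C, u ≤ M) : prv C v = M := by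
  have h2 : ∃ w, w ∈ C ∧ ∀ u ∈ C, u ≤ w := ⟨M, hM⟩
  have hch := Classical.choose_spec h2
  rw [prv, dif_neg h, dif_pos h2]
  exact le_antisymm (hM.2 _ hch.1) (hch.2 M hM.1)

lemma prv_nxt {C : Set ℤ} {v : ℤ} (hv : v ∈ C) (h : ∃ w, w ∈ C ∧ v < w) :
    prv C (nxt C v) = v := by
  obtain ⟨h1, h2, h3⟩ := nxt_spec h
  have h' : ∃ w, w ∈ C ∧ w < nxt C v := ⟨v, hv, h2⟩
  obtain ⟨g1, g2, g3⟩ := prv_spec h'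
  have := g3 v hv h2
  rcases lt_or_eq_of_le this with hlt | heq
  · exact absurd (h3 _ g1 hlt) (not_le.mpr g2)
  · exact heq.symm

lemma nxt_prv {C : Set ℤ} {v : ℤ} (hv : v ∈ C) (h : ∃ w, w ∈ C ∧ w < v) :
    nxt C (prv C v) = v := by
  obtain ⟨h1, h2, h3⟩ := prv_spec h
  have h' : ∃ w, w ∈ C ∧ prv C v < w := ⟨v, hv, h2⟩
  obtain ⟨g1, g2, g3⟩ := nxt_spec h'
  have := g3 v hv h2
  rcases lt_or_eq_of_le this with hlt | heq
  · exact absurd (h3 _ g1 hlt) (not_le.mpr g2)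
  · exact heq

/-- Set-level abstraction of a `D`-cell. -/
structure IsCellSet (D : Set (ℤ × ℤ)) (C : Set ℤ) : Prop where
  consec : ∀ v ∈ C, ∀ w ∈ C, v < w → (∀ u ∈ C, ¬(v < u ∧ u < w)) →
    (w = v + 1 ∨ (v, w) ∈ D)
  nonbdry : ∀ v ∈ C, ∀ w ∈ C, v < w → (∃ u ∈ C, v < u ∧ u < w) →
    ((∃ z ∈ C, z < v) ∨ (∃ z ∈ C, w < z)) → (v, w) ∉ D
  box : (∃ m ∈ C, ∃ M ∈ C, (∀ u ∈ C, m ≤ u ∧ u ≤ M) ∧ (M = m ∨ M = m + 1 ∨ (m, M) ∈ D)) ∨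
    ((∀ z : ℤ, ∃ w ∈ C, w < z) ∧ (∀ z : ℤ, ∃ w ∈ C, z < w))

lemma cellBoundary_iff {S : Finset ℤ} {a b : ℤ} (ha : a ∈ S) (hb : b ∈ S) (hab : a < b) :
    CellBoundaryPair S a b ↔
      ((∀ u ∈ (S : Set ℤ), ¬(a < u ∧ u < b)) ∨ (∀ u ∈ (S : Set ℤ), a ≤ u ∧ u ≤ b)) := by
  constructor
  · rintro ⟨-, -, -, h⟩
    exact h.imp (fun h u hu => h u hu) (fun h u hu => h u hu)
  · intro h
    exact ⟨ha, hb, hab, h.imp (fun h u hu => h u hu) (fun h u hu => h u hu)⟩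

lemma cellSet_of_finite {D : Set (ℤ × ℤ)} {S : Finset ℤ} (hS : IsFiniteCell D S) :
    IsCellSet D (S : Set ℤ) := by
  obtain ⟨hne, hbd, hnbd⟩ := hS
  constructor
  · intro v hv w hw hvw hcon
    have : CellBoundaryPair S v w := ⟨hv, hw, hvw, Or.inl (fun u hu => hcon u hu)⟩
    rcases hbd v w this with h | h
    · exact Or.inl h
    · exact Or.inr h
  · intro v hv w hw hvw ⟨u, hu, hu1, hu2⟩ hside
    refine hnbd v hv w hw hvw ?_
    rintro ⟨-, -, -, hor | hor⟩
    · exact hor u hu ⟨hu1, hu2⟩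
    · rcases hside with ⟨z, hz, hzv⟩ | ⟨z, hz, hzw⟩
      · exact absurd ((hor z hz).1) (not_le.mpr hzv)
      · exact absurd ((hor z hz).2) (not_le.mpr hzw)
  · left
    refine ⟨S.min' hne, S.min'_mem hne, S.max' hne, S.max'_mem hne,
      fun u hu => ⟨S.min'_le u hu, S.le_max' u hu⟩, ?_⟩
    rcases eq_or_lt_of_le (S.min'_le _ (S.max'_mem hne)) with h | h
    · exact Or.inl h.symm
    · have hbdp : CellBoundaryPair S (S.min' hne) (S.max' hne) :=
        ⟨S.min'_mem hne, S.max'_mem hne, h, Or.inr (fun u hu => ⟨S.min'_le u hu, S.le_max' u hu⟩)⟩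
      rcases hbd _ _ hbdp with he | hd
      · exact Or.inr (Or.inl he)
      · exact Or.inr (Or.inr hd)

lemma strictMono_int_add {f : ℤ → ℤ} (hf : StrictMono f) : ∀ a b : ℤ, a ≤ b → f a + (b - a) ≤ f b := by
  intro a b hab
  have h : ∀ n : ℕ, f a + n ≤ f (a + n) := by
    intro n
    induction n with
    | zero => simp
    | succ k ih =>
      have h1 : f (a + k) < f (a + k + 1) := hf (by omega)
      have h2 : a + ((k+1 : ℕ) : ℤ) = a + k + 1 := by push_cast; ring
      rw [h2]
      push_cast
      push_cast at ih
      omega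
  obtain ⟨n, hn⟩ : ∃ n : ℕ, b - a = n := ⟨(b - a).toNat, by omega⟩
  have := h n
  have heq : a + (n : ℤ) = b := by omega
  rw [heq] at this
  omega

lemma cellSet_of_infinite {D : Set (ℤ × ℤ)} {f : ℤ → ℤ} (hf : IsInfiniteCell D f) :
    IsCellSet D (Set.range f) := by
  obtain ⟨hmono, hcons, hno⟩ := hf
  constructor
  · rintro v ⟨i, rfl⟩ w ⟨j, rfl⟩ hvw hcon
    have hij : i < j := hmono.lt_iff_lt.mp hvw
    have hj : j = i + 1 := by
      by_contra hne
      have h2 : i + 1 < j := by omega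
      exact hcon (f (i+1)) ⟨i+1, rfl⟩ ⟨hmono (by omega), hmono h2⟩
    subst hj
    rcases hcons i with he | hd
    · exact Or.inl he
    · exact Or.inr hd
  · rintro v ⟨i, rfl⟩ w ⟨j, rfl⟩ hvw ⟨u, ⟨k, rfl⟩, hk1, hk2⟩ -
    have hik : i < k := hmono.lt_iff_lt.mp hk1
    have hkj : k < j := hmono.lt_iff_lt.mp hk2
    exact hno i j (by omega)
  · right
    constructor
    · intro z
      refine ⟨f (z - 1 - ((f (z-1) - (z-1)).toNat : ℤ)), ⟨_, rfl⟩, ?_⟩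
      have := strictMono_int_add hmono (z - 1 - ((f (z-1) - (z-1)).toNat : ℤ)) (z-1) (by omega)
      have h0 : (0 : ℤ) ≤ ((f (z-1) - (z-1)).toNat : ℤ) := by positivity
      have h1 : f (z-1) - (z-1) ≤ ((f (z-1) - (z-1)).toNat : ℤ) := by omega
      omega
    · intro z
      refine ⟨f (z + 1 + ((z + 1 - f (z+1)).toNat : ℤ)), ⟨_, rfl⟩, ?_⟩
      have := strictMono_int_add hmono (z+1) (z + 1 + ((z + 1 - f (z+1)).toNat : ℤ)) (by omega)
      have h1 : z + 1 - f (z+1) ≤ ((z + 1 - f (z+1)).toNat : ℤ) := by omega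
      omega



/-! ### Basic consequences of the hypotheses -/

lemma D_subset_U {U D : Set (ℤ × ℤ)} (hD : D ⊆ core U) : D ⊆ U := fun _ hp => (hD hp).1

lemma D_nocross {U D : Set (ℤ × ℤ)} (hD : D ⊆ core U) {p q : ℤ × ℤ} (hp : p ∈ D)
    (hq : q ∈ U) : ¬ Cross p q := (hD hp).2 q hq

lemma DD_nocross {U D : Set (ℤ × ℤ)} (hD : D ⊆ core U) {p q : ℤ × ℤ} (hp : p ∈ D)
    (hq : q ∈ D) : ¬ Cross p q := D_nocross hD hp (D_subset_U hD hq)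

lemma D_arc {U D : Set (ℤ × ℤ)} (hU : IsPtolemy U) (hD : D ⊆ core U) {a b : ℤ}
    (h : (a, b) ∈ D) : a + 2 ≤ b := hU.1 _ (D_subset_U hD h)

/-! ### Locating integers relative to a cell set -/

lemma gap_of_not_mem {D : Set (ℤ × ℤ)} {C : Set ℤ} (hC : IsCellSet D C) {x y z : ℤ}
    (hx : x ∈ C) (hy : y ∈ C) (hxz : x < z) (hzy : z < y) (hz : z ∉ C) :
    ∃ s ∈ C, ∃ s' ∈ C, s < z ∧ z < s' ∧ (∀ u ∈ C, ¬(s < u ∧ u < s')) ∧ (s, s') ∈ D := by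
  obtain ⟨s, ⟨hsC, hsz⟩, hsg⟩ := Int.exists_greatest_of_bdd
    (P := fun w => w ∈ C ∧ w < z) ⟨z, fun _ h => le_of_lt h.2⟩ ⟨x, hx, hxz⟩
  obtain ⟨s', ⟨hs'C, hzs'⟩, hs'l⟩ := Int.exists_least_of_bdd
    (P := fun w => w ∈ C ∧ z < w) ⟨z, fun _ h => le_of_lt h.2⟩ ⟨y, hy, hzy⟩
  have hnb : ∀ u ∈ C, ¬(s < u ∧ u < s') := by
    intro u hu ⟨h1, h2⟩
    rcases lt_trichotomy u z with h | h | h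
    · exact absurd (hsg u ⟨hu, h⟩) (not_le.mpr h1)
    · exact hz (h ▸ hu)
    · exact absurd (hs'l u ⟨hu, h⟩) (not_le.mpr h2)
  have hD' : (s, s') ∈ D := by
    rcases hC.consec s hsC s' hs'C (by omega) hnb with he | hd
    · omega
    · exact hd
  exact ⟨s, hsC, s', hs'C, hsz, hzs', hnb, hD'⟩

/-- Inside a cell, a `D`-arc cannot cross a pair of cell vertices. -/
lemma no_cross_D {U D : Set (ℤ × ℤ)} (hU : IsPtolemy U) (hD : D ⊆ core U) {C : Set ℤ}
    (hC : IsCellSet D C) {x y c d : ℤ} (hx : x ∈ C) (hy : y ∈ C) (hq : (c, d) ∈ D) :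
    ¬ Cross (x, y) (c, d) := by
  intro hcr
  have hcd : c + 2 ≤ d := D_arc hU hD hq
  rcases hcr with ⟨h1, h2, h3⟩ | ⟨h1, h2, h3⟩
  · -- x < c < y < d
    simp only at h1 h2 h3
    -- first, c ∈ C
    have hcC : c ∈ C := by
      by_contra hcC
      obtain ⟨s, hsC, s', hs'C, hs1, hs2, hnb, hssD⟩ := gap_of_not_mem hC hx hy h1 h2 hcC
      have hs'y : s' ≤ y := by
        by_contra hc
        exact hnb y hy ⟨by omega, by omega⟩
      exact DD_nocross hD hq hssD (Or.inr ⟨hs1, hs2, by omega⟩)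
    -- next, d ∈ C
    have hdC : d ∈ C := by
      by_contra hdC
      rcases hC.box with ⟨m, hm, M, hM, hbd, hdeg⟩ | ⟨hlo, hhi⟩
      · have hyM := (hbd y hy).2
        have hxm := (hbd x hx).1
        rcases lt_or_ge M d with hMd | hdM
        · have hmMD : (m, M) ∈ D := by
            rcases hdeg with h | h | h
            · omega
            · omega
            · exact h
          exact DD_nocross hD hq hmMD (Or.inr ⟨by omega, by omega, hMd⟩)
        · have hdM' : d < M := lt_of_le_of_ne hdM (fun h => hdC (h ▸ hM))
          obtain ⟨s, hsC, s', hs'C, hs1, hs2, hnb, hssD⟩ :=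
            gap_of_not_mem hC hy hM h3 hdM' hdC
          have hys : y ≤ s := by
            by_contra hc
            exact hnb y hy ⟨by omega, by omega⟩
          exact DD_nocross hD hq hssD (Or.inl ⟨by omega, hs1, hs2⟩)
      · obtain ⟨y₂, hy₂C, hy₂⟩ := hhi d
        obtain ⟨s, hsC, s', hs'C, hs1, hs2, hnb, hssD⟩ :=
          gap_of_not_mem hC hy hy₂C h3 hy₂ hdC
        have hys : y ≤ s := by
          by_contra hc
          exact hnb y hy ⟨by omega, by omega⟩
        exact DD_nocross hD hq hssD (Or.inl ⟨by omega, hs1, hs2⟩)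
    exact hC.nonbdry c hcC d hdC (by omega) ⟨y, hy, h2, h3⟩ (Or.inl ⟨x, hx, h1⟩) hq
  · -- c < x < d < y
    simp only at h1 h2 h3
    have hdC : d ∈ C := by
      by_contra hdC
      obtain ⟨s, hsC, s', hs'C, hs1, hs2, hnb, hssD⟩ := gap_of_not_mem hC hx hy h2 h3 hdC
      have hxs : x ≤ s := by
        by_contra hc
        exact hnb x hx ⟨by omega, by omega⟩
      exact DD_nocross hD hq hssD (Or.inl ⟨by omega, hs1, hs2⟩)
    have hcC : c ∈ C := by
      by_contra hcC
      rcases hC.box with ⟨m, hm, M, hM, hbd, hdeg⟩ | ⟨hlo, hhi⟩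
      · have hxm := (hbd x hx).1
        have hyM := (hbd y hy).2
        rcases lt_or_ge c m with hcm | hmc
        · have hmMD : (m, M) ∈ D := by
            rcases hdeg with h | h | h
            · omega
            · omega
            · exact h
          exact DD_nocross hD hq hmMD (Or.inl ⟨hcm, by omega, by omega⟩)
        · have hmc' : m < c := lt_of_le_of_ne hmc (fun h => hcC (h ▸ hm))
          obtain ⟨s, hsC, s', hs'C, hs1, hs2, hnb, hssD⟩ :=
            gap_of_not_mem hC hm hx hmc' h1 hcC
          have hs'x : s' ≤ x := by
            by_contra hc
            exact hnb x hx ⟨by omega, by omega⟩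
          exact DD_nocross hD hq hssD (Or.inr ⟨hs1, hs2, by omega⟩)
      · obtain ⟨x₂, hx₂C, hx₂⟩ := hlo c
        obtain ⟨s, hsC, s', hs'C, hs1, hs2, hnb, hssD⟩ :=
          gap_of_not_mem hC hx₂C hx hx₂ h1 hcC
        have hs'x : s' ≤ x := by
          by_contra hc
          exact hnb x hx ⟨by omega, by omega⟩
        exact DD_nocross hD hq hssD (Or.inr ⟨hs1, hs2, by omega⟩)
    exact hC.nonbdry c hcC d hdC (by omega) ⟨x, hx, h1, h2⟩ (Or.inr ⟨y, hy, h3⟩) hq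

/-! ### Agreement of successors across two cells -/

lemma nxt_agree_aux {U D : Set (ℤ × ℤ)} (hU : IsPtolemy U) (hD : D ⊆ core U)
    {S T : Set ℤ} (hS : IsCellSet D S) (hT : IsCellSet D T) {v w₁ w₂ : ℤ}
    (hvS : v ∈ S) (hvT : v ∈ T) (h1S : w₁ ∈ S) (h1T : w₁ ∈ T) (h2S : w₂ ∈ S) (h2T : w₂ ∈ T)
    (hd1 : v ≠ w₁) (hd2 : v ≠ w₂) (hd3 : w₁ ≠ w₂)
    (haS : ∃ w, w ∈ S ∧ v < w) (haT : ∃ w, w ∈ T ∧ v < w)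
    (hlt : nxt S v < nxt T v) : False := by
  obtain ⟨hcS, hvc, hcmin⟩ := nxt_spec haS
  obtain ⟨hc'T, hvc', hc'min⟩ := nxt_spec haT
  set c := nxt S v with hc
  set c' := nxt T v with hc'
  -- T has no elements strictly between v and c'
  have hTgap : ∀ u ∈ T, ¬(v < u ∧ u < c') := fun u hu ⟨h1, h2⟩ =>
    absurd (hc'min u hu h1) (not_le.mpr h2)
  -- (v, c') ∈ D
  have hvc'D : (v, c') ∈ D := by
    rcases hT.consec v hvT c' hc'T hvc' hTgap with he | hd
    · omega
    · exact hd
  have hcnT : c ∉ T := fun h => hTgap c h ⟨hvc, hlt⟩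
  by_cases hc'S : c' ∈ S
  · -- (v, c') is a non-boundary pair of S
    refine hS.nonbdry v hvS c' hc'S (by omega) ⟨c, hcS, hvc, hlt⟩ ?_ hvc'D
    by_contra hcon
    push_neg at hcon
    obtain ⟨hno_lo, hno_hi⟩ := hcon
    -- then S ⊆ [v, c'], so S ∩ T ⊆ {v, c'}
    have key : ∀ w, w ∈ S → w ∈ T → v ≠ w → w = c' := by
      intro w hwS hwT hdw
      have l1 : v ≤ w := hno_lo w hwS
      have l2 : w ≤ c' := hno_hi w hwS
      rcases eq_or_lt_of_le l1 with h | h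
      · exact absurd h hdw
      rcases eq_or_lt_of_le l2 with h' | h'
      · exact h'
      · exact absurd (hTgap w hwT ⟨h, h'⟩) (fun hq => hq)
    exact hd3 ((key w₁ h1S h1T hd1).trans (key w₂ h2S h2T hd2).symm)
  · rcases hS.box with ⟨m, hm, M, hM, hbd, hdeg⟩ | ⟨hlo, hhi⟩
    · rcases lt_or_ge c' M with hc'M | hMc'
      · -- c' sits in a gap of S
        obtain ⟨s, hsC, s', hs'C, hs1, hs2, hnb, hssD⟩ :=
          gap_of_not_mem hS hvS hM hvc' hc'M hc'S
        have hcs : c ≤ s := by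
          by_contra hcon; exact hnb c hcS ⟨by omega, by omega⟩
        exact DD_nocross hD hvc'D hssD (Or.inl ⟨by omega, hs1, hs2⟩)
      · -- c' ≥ M; in fact c' > M since c' ∉ S
        have hMc'' : M < c' := lt_of_le_of_ne hMc' (fun h => hc'S (h ▸ hM))
        have hmMD : (m, M) ∈ D := by
          rcases hdeg with h | h | h
          · -- S = {m}: contradiction with v ≠ w₁ both in S
            obtain ⟨e1, e1'⟩ := hbd v hvS
            obtain ⟨e2, e2'⟩ := hbd w₁ h1S
            omega
          · -- S ⊆ {m, m+1}: contradiction with three distinct elements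
            obtain ⟨e1, e1'⟩ := hbd v hvS
            obtain ⟨e2, e2'⟩ := hbd w₁ h1S
            obtain ⟨e3, e3'⟩ := hbd w₂ h2S
            omega
          · exact h
        rcases eq_or_lt_of_le (hbd v hvS).1 with hvm | hvm
        · -- v = m : S ∩ T = {v}
          have hw₁ : w₁ = v := by
            have l1 := (hbd w₁ h1S).1
            have l2 := (hbd w₁ h1S).2
            by_contra hne
            exact hTgap w₁ h1T ⟨by omega, by omega⟩
          exact hd1 hw₁.symm
        · have hcM : c ≤ M := (hbd c hcS).2
          exact DD_nocross hD hmMD hvc'D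
            (Or.inl ⟨hvm, lt_of_lt_of_le hvc hcM, hMc''⟩)
    · obtain ⟨z, hzS, hz⟩ := hhi c'
      obtain ⟨s, hsC, s', hs'C, hs1, hs2, hnb, hssD⟩ :=
        gap_of_not_mem hS hvS hzS hvc' hz hc'S
      have hcs : c ≤ s := by
        by_contra hcon; exact hnb c hcS ⟨by omega, by omega⟩
      exact DD_nocross hD hvc'D hssD (Or.inl ⟨by omega, hs1, hs2⟩)

lemma nxt_agree {U D : Set (ℤ × ℤ)} (hU : IsPtolemy U) (hD : D ⊆ core U)
    {S T : Set ℤ} (hS : IsCellSet D S) (hT : IsCellSet D T) {v w₁ w₂ : ℤ}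
    (hvS : v ∈ S) (hvT : v ∈ T) (h1S : w₁ ∈ S) (h1T : w₁ ∈ T) (h2S : w₂ ∈ S) (h2T : w₂ ∈ T)
    (hd1 : v ≠ w₁) (hd2 : v ≠ w₂) (hd3 : w₁ ≠ w₂)
    (haS : ∃ w, w ∈ S ∧ v < w) (haT : ∃ w, w ∈ T ∧ v < w) :
    nxt S v = nxt T v := by
  rcases lt_trichotomy (nxt S v) (nxt T v) with h | h | h
  · exact absurd (nxt_agree_aux hU hD hS hT hvS hvT h1S h1T h2S h2T hd1 hd2 hd3 haS haT h)
      (fun h => h)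
  · exact h
  · exact absurd (nxt_agree_aux hU hD hT hS hvT hvS h1T h1S h2T h2S hd1 hd2 hd3 haT haS h)
      (fun h => h)

/-! ### Finite cells: `cellPred` versus `prv` -/

lemma cellPred_eq_prv {S : Finset ℤ} (hne : S.Nonempty) (x : ℤ) :
    cellPred S x = prv (S : Set ℤ) x := by
  by_cases h : ∃ w, w ∈ (S : Set ℤ) ∧ w < x
  · have hf : (S.filter (fun c => c < x)).Nonempty := by
      obtain ⟨w, hw, hwx⟩ := h
      exact ⟨w, Finset.mem_filter.mpr ⟨hw, hwx⟩⟩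
    rw [cellPred, dif_pos hf]
    obtain ⟨p1, p2, p3⟩ := prv_spec h
    have hmem := Finset.max'_mem _ hf
    rw [Finset.mem_filter] at hmem
    apply le_antisymm
    · exact p3 _ hmem.1 hmem.2
    · exact Finset.le_max' (S.filter (fun c => c < x)) (prv (S : Set ℤ) x)
        (Finset.mem_filter.mpr ⟨Finset.mem_coe.mp p1, p2⟩)
  · have hf : ¬ (S.filter (fun c => c < x)).Nonempty := by
      rintro ⟨w, hw⟩
      rw [Finset.mem_filter] at hw
      exact h ⟨w, hw.1, hw.2⟩
    rw [cellPred, dif_neg hf, dif_pos hne,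
      prv_wrap h ⟨S.max'_mem hne, fun u hu => S.le_max' u hu⟩]

lemma prv_min {S : Finset ℤ} (hne : S.Nonempty) :
    prv (S : Set ℤ) (S.min' hne) = S.max' hne := by
  apply prv_wrap
  · rintro ⟨w, hw, hlt⟩
    exact absurd (S.min'_le w hw) (not_le.mpr hlt)
  · exact ⟨S.max'_mem hne, fun u hu => S.le_max' u hu⟩

lemma nxt_max {S : Finset ℤ} (hne : S.Nonempty) :
    nxt (S : Set ℤ) (S.max' hne) = S.min' hne := by
  apply nxt_wrap
  · rintro ⟨w, hw, hlt⟩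
    exact absurd (S.le_max' w hw) (not_le.mpr hlt)
  · exact ⟨S.min'_mem hne, fun u hu => S.min'_le u hu⟩

lemma not_cellBoundary_iff {S : Finset ℤ} {a b : ℤ} (ha : a ∈ S) (hb : b ∈ S) (hab : a < b) :
    ¬ CellBoundaryPair S a b ↔
      (∃ u ∈ S, a < u ∧ u < b) ∧ (∃ u ∈ S, u < a ∨ b < u) := by
  rw [cellBoundary_iff ha hb hab]
  constructor
  · intro h
    rcases not_or.mp h with ⟨h1, h2⟩
    push_neg at h1 h2
    obtain ⟨u, hu, hu2⟩ := h1
    obtain ⟨v, hv, hv2⟩ := h2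
    refine ⟨⟨u, Finset.mem_coe.mp hu, hu2⟩, v, Finset.mem_coe.mp hv, ?_⟩
    rcases le_or_gt a v with h' | h'
    · exact Or.inr (hv2 h')
    · exact Or.inl h'
  · rintro ⟨⟨u, hu, h1, h2⟩, v, hv, h3⟩ (hc | hc)
    · exact hc u (Finset.mem_coe.mpr hu) ⟨h1, h2⟩
    · have := hc v (Finset.mem_coe.mpr hv)
      rcases h3 with h | h <;> omega

lemma ordPair_eq {x y : ℤ} (h : x ≤ y) : ordPair x y = (x, y) := by
  rw [ordPair, min_eq_left h, max_eq_right h]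

/-! ### The bundle of facts about one mutated arc -/

def GoodImage (U D : Set (ℤ × ℤ)) (C : Set ℤ) (p : ℤ × ℤ) : Prop :=
  IsCellSet D C ∧ p.1 ∈ C ∧ p.2 ∈ C ∧ p.1 + 2 ≤ p.2 ∧
  (∃ α β : ℤ, (α, β) ∈ U ∧ α < β ∧
    ((nxt C p.1 = α ∧ nxt C p.2 = β ∧ p.2 < β) ∨
     (nxt C p.1 = β ∧ p.1 < β ∧ (∀ u ∈ C, u ≤ p.2) ∧ α ∈ C ∧ (∀ u ∈ C, α ≤ u)))) ∧
  (∀ x y : ℤ, x ∈ C → y ∈ C → x < y → IsArc x y →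
    (min (nxt C x) (nxt C y) + 2 ≤ max (nxt C x) (nxt C y) →
      ordPair (nxt C x) (nxt C y) ∈ U) → (x, y) ∈ mutation U D)

/-- Realization of combination arcs inside a finite cell. -/
lemma realize_fin {U D : Set (ℤ × ℤ)} {S : Finset ℤ} (hS : IsFiniteCell D S) :
    ∀ x y : ℤ, x ∈ (S : Set ℤ) → y ∈ (S : Set ℤ) → x < y → IsArc x y →
      (min (nxt (S : Set ℤ) x) (nxt (S : Set ℤ) y) + 2 ≤
        max (nxt (S : Set ℤ) x) (nxt (S : Set ℤ) y) →
        ordPair (nxt (S : Set ℤ) x) (nxt (S : Set ℤ) y) ∈ U) → (x, y) ∈ mutation U D := by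
  intro x y hx hy hxy harc hUp
  have hne := hS.1
  rw [Finset.mem_coe] at hx hy
  by_cases hb : CellBoundaryPair S x y
  · rcases hS.2.1 x y hb with he | hd
    · rw [IsEdge] at he
      rw [IsArc] at harc
      omega
    · exact Or.inl (Or.inl hd)
  · set m := S.min' hne with hm
    set M := S.max' hne with hM
    have hxM : x ≠ M := by
      intro h
      have h1 := S.le_max' y hy
      omega
    have hnx := nxt_spec (C := (S : Set ℤ)) (v := x)
      ⟨M, Finset.mem_coe.mpr (S.max'_mem hne), lt_of_le_of_ne (S.le_max' x hx) hxM⟩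
    by_cases hyM : y = M
    · -- wrap at y
      have hnxty : nxt (S : Set ℤ) y = m := hyM ▸ nxt_max hne
      have hxm : m ≤ x := S.min'_le x hx
      have hc₀ : min (nxt (S:Set ℤ) x) (nxt (S:Set ℤ) y) = m := by
        rw [hnxty]; exact min_eq_right (by omega)
      have hd₀ : max (nxt (S:Set ℤ) x) (nxt (S:Set ℤ) y) = nxt (S:Set ℤ) x := by
        rw [hnxty]; exact max_eq_left (by omega)
      have hnb₀ : ¬ CellBoundaryPair S m (nxt (S:Set ℤ) x) := by
        rintro ⟨-, -, -, hcase | hcase⟩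
        · -- consecutive: forces x = m
          have hxm' : x = m := by
            by_contra hne2
            exact hcase x hx ⟨by omega, hnx.2.1⟩
          refine hb ⟨hx, hy, hxy, Or.inr (fun u hu => ?_)⟩
          have l1 := S.min'_le u hu
          have l2 := S.le_max' u hu
          omega
        · -- min-max: forces nxt x = M, so x = prv M and (x, M) consecutive
          have hnxM : nxt (S:Set ℤ) x = M := le_antisymm
            (S.le_max' _ (Finset.mem_coe.mp hnx.1)) ((hcase M (S.max'_mem hne)).2)
          refine hb ⟨hx, hy, hxy, Or.inl (fun u hu ⟨h1, h2⟩ => ?_)⟩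
          have := hnx.2.2 u (Finset.mem_coe.mpr hu) h1
          omega
      have hmnx : m < nxt (S:Set ℤ) x := by omega
      obtain ⟨⟨u₀, hu₀, hu₀1, hu₀2⟩, -⟩ := (not_cellBoundary_iff (S.min'_mem hne)
        (Finset.mem_coe.mp hnx.1) hmnx).mp hnb₀
      have hUp' := hUp (by rw [hc₀, hd₀]; omega)
      rw [ordPair, hc₀, hd₀] at hUp'
      refine Or.inl (Or.inr ⟨S, hS, m, nxt (S:Set ℤ) x, hUp', ⟨S.min'_mem hne,
        Finset.mem_coe.mp hnx.1, by omega, hnb₀⟩, ?_⟩)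
      have hxM' : x ≤ M := by
        have := S.le_max' y hy
        omega
      rw [cellPred_eq_prv hne, cellPred_eq_prv hne, prv_min hne, prv_nxt
        (Finset.mem_coe.mpr hx) ⟨M, Finset.mem_coe.mpr (S.max'_mem hne),
          lt_of_le_of_ne (S.le_max' x hx) hxM⟩]
      rw [ordPair, min_eq_right hxM', max_eq_left hxM', hyM]
    · -- no wrap
      have hny := nxt_spec (C := (S : Set ℤ)) (v := y)
        ⟨M, Finset.mem_coe.mpr (S.max'_mem hne), lt_of_le_of_ne (S.le_max' y hy) hyM⟩
      have hxny : nxt (S:Set ℤ) x ≤ y := hnx.2.2 y (Finset.mem_coe.mpr hy) hxy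
      have hord : nxt (S:Set ℤ) x < nxt (S:Set ℤ) y := by
        have := hny.2.1; omega
      have hnb₀ : ¬ CellBoundaryPair S (nxt (S:Set ℤ) x) (nxt (S:Set ℤ) y) := by
        rintro ⟨-, -, -, hcase | hcase⟩
        · -- consecutive (nxt x, nxt y) ⇒ consecutive (x, y)
          refine hb ⟨hx, hy, hxy, Or.inl (fun u hu ⟨h1, h2⟩ => ?_)⟩
          have l1 : nxt (S:Set ℤ) x ≤ u := hnx.2.2 u (Finset.mem_coe.mpr hu) h1
          rcases eq_or_lt_of_le l1 with h | h
          · -- u = nxt x < y, then y is strictly between nxt x and nxt y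
            exact hcase y hy ⟨by omega, hny.2.1⟩
          · exact hcase u hu ⟨h, by omega⟩
        · -- min-max: x < nxt x contradicts minimality
          have := (hcase x hx).1
          have := hnx.2.1
          omega
      obtain ⟨⟨u₀, hu₀, hu₀1, hu₀2⟩, -⟩ := (not_cellBoundary_iff (Finset.mem_coe.mp hnx.1)
        (Finset.mem_coe.mp hny.1) hord).mp hnb₀
      have hUp' := hUp (by rw [min_eq_left (le_of_lt hord), max_eq_right (le_of_lt hord)]; omega)
      rw [ordPair_eq (le_of_lt hord)] at hUp'
      refine Or.inl (Or.inr ⟨S, hS, nxt (S:Set ℤ) x, nxt (S:Set ℤ) y, hUp',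
        ⟨Finset.mem_coe.mp hnx.1, Finset.mem_coe.mp hny.1, hord, hnb₀⟩, ?_⟩)
      rw [cellPred_eq_prv hne, cellPred_eq_prv hne,
        prv_nxt (Finset.mem_coe.mpr hx) ⟨M, Finset.mem_coe.mpr (S.max'_mem hne),
          lt_of_le_of_ne (S.le_max' x hx) hxM⟩,
        prv_nxt (Finset.mem_coe.mpr hy) ⟨M, Finset.mem_coe.mpr (S.max'_mem hne),
          lt_of_le_of_ne (S.le_max' y hy) hyM⟩, ordPair_eq (le_of_lt hxy)]

lemma nxt_range {f : ℤ → ℤ} (hmono : StrictMono f) (i : ℤ) :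
    nxt (Set.range f) (f i) = f (i + 1) := by
  have h : ∃ w, w ∈ Set.range f ∧ f i < w := ⟨f (i+1), ⟨i+1, rfl⟩, hmono (by omega)⟩
  obtain ⟨⟨k, hk⟩, h2, h3⟩ := nxt_spec h
  have hik : i < k := hmono.lt_iff_lt.mp (hk ▸ h2)
  have := h3 (f (i+1)) ⟨i+1, rfl⟩ (hmono (by omega))
  have h4 : f (i+1) ≤ f k := hmono.le_iff_le.mpr (by omega)
  omega

/-- Realization of combination arcs inside an infinite cell. -/
lemma realize_inf {U D : Set (ℤ × ℤ)} {f : ℤ → ℤ} (hf : IsInfiniteCell D f) :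
    ∀ x y : ℤ, x ∈ Set.range f → y ∈ Set.range f → x < y → IsArc x y →
      (min (nxt (Set.range f) x) (nxt (Set.range f) y) + 2 ≤
        max (nxt (Set.range f) x) (nxt (Set.range f) y) →
        ordPair (nxt (Set.range f) x) (nxt (Set.range f) y) ∈ U) → (x, y) ∈ mutation U D := by
  rintro x y ⟨i, rfl⟩ ⟨j, rfl⟩ hxy harc hUp
  have hmono := hf.1
  have hij : i < j := hmono.lt_iff_lt.mp hxy
  rw [nxt_range hmono, nxt_range hmono] at hUp
  have hlt : f (i+1) < f (j+1) := hmono (by omega)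
  by_cases hcons : j = i + 1
  · subst hcons
    rcases hf.2.1 i with he | hd
    · rw [IsEdge] at he
      rw [IsArc] at harc
      omega
    · exact Or.inl (Or.inl hd)
  · have harc2 : f (i+1) + 2 ≤ f (j+1) := by
      have := strictMono_int_add hmono (i+1) (j+1) (by omega)
      omega
    have hUp' := hUp (by rw [min_eq_left (le_of_lt hlt), max_eq_right (le_of_lt hlt)]; omega)
    rw [ordPair_eq (le_of_lt hlt)] at hUp'
    refine Or.inr ⟨f, hf, i + 1, j + 1, by omega, hUp', ?_⟩
    rw [show i + 1 - 1 = i by ring, show j + 1 - 1 = j by ring]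

/-- Every element of the finite-cell part of the mutation admits a `GoodImage` bundle. -/
lemma goodImage_of_fin {U D : Set (ℤ × ℤ)} {S : Finset ℤ} (hS : IsFiniteCell D S)
    {α β : ℤ} (horig : (α, β) ∈ U) (hint : FiniteInterior S α β) :
    GoodImage U D (S : Set ℤ) (ordPair (cellPred S α) (cellPred S β)) := by
  have hne := hS.1
  obtain ⟨hαS, hβS, hαβ, hnbd⟩ := hint
  obtain ⟨⟨u, hu, hu1, hu2⟩, -⟩ := (not_cellBoundary_iff hαS hβS hαβ).mp hnbd
  set m := S.min' hne with hm
  set M := S.max' hne with hM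
  have hβm : S.min' hne < β := lt_of_le_of_lt (S.min'_le α hαS) hαβ
  obtain ⟨hpβ1, hpβ2, hpβ3⟩ := prv_spec (C := (S : Set ℤ)) (v := β)
    ⟨m, Finset.mem_coe.mpr (S.min'_mem hne), hβm⟩
  have hαpβ : α ≤ prv (S : Set ℤ) β := hpβ3 α (Finset.mem_coe.mpr hαS) hαβ
  have hupβ : u ≤ prv (S : Set ℤ) β := hpβ3 u (Finset.mem_coe.mpr hu) hu2
  by_cases hαm : α = m
  · -- wrap case
    have hβM : β ≠ M := by
      intro h
      exact hnbd ⟨hαS, hβS, hαβ, Or.inr (fun c hc =>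
        ⟨hαm ▸ S.min'_le c hc, h ▸ S.le_max' c hc⟩)⟩
    have hβM' : β < M := lt_of_le_of_ne (S.le_max' β hβS) hβM
    have hpα : cellPred S α = M := by
      rw [cellPred_eq_prv hne, hαm, prv_min hne]
    have hpairs : ordPair (cellPred S α) (cellPred S β) = (prv (S:Set ℤ) β, M) := by
      rw [hpα, cellPred_eq_prv hne, ordPair, min_eq_right (by omega),
        max_eq_left (by omega)]
    rw [hpairs]
    have hMle : S.le_max' β hβS = S.le_max' β hβS := rfl
    refine ⟨cellSet_of_finite hS, hpβ1, Finset.mem_coe.mpr (S.max'_mem hne),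
      show prv (S:Set ℤ) β + 2 ≤ M by omega,
      ⟨α, β, horig, hαβ, Or.inr ⟨?_, hpβ2, ?_, ?_, ?_⟩⟩, realize_fin hS⟩
    · show nxt (S : Set ℤ) (prv (S:Set ℤ) β) = β
      exact nxt_prv (Finset.mem_coe.mpr hβS) ⟨m, Finset.mem_coe.mpr (S.min'_mem hne), hβm⟩
    · intro w hw
      exact S.le_max' w (Finset.mem_coe.mp hw)
    · exact Finset.mem_coe.mpr hαS
    · intro w hw
      exact hαm ▸ S.min'_le w (Finset.mem_coe.mp hw)
  · -- regular case
    have hmα : S.min' hne < α := lt_of_le_of_ne (S.min'_le α hαS) (Ne.symm hαm)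
    obtain ⟨hpα1, hpα2, hpα3⟩ := prv_spec (C := (S : Set ℤ)) (v := α)
      ⟨m, Finset.mem_coe.mpr (S.min'_mem hne), hmα⟩
    have hpairs : ordPair (cellPred S α) (cellPred S β) =
        (prv (S:Set ℤ) α, prv (S:Set ℤ) β) := by
      rw [cellPred_eq_prv hne, cellPred_eq_prv hne, ordPair,
        min_eq_left (by omega), max_eq_right (by omega)]
    rw [hpairs]
    refine ⟨cellSet_of_finite hS, hpα1, hpβ1,
      show prv (S:Set ℤ) α + 2 ≤ prv (S:Set ℤ) β by omega,
      ⟨α, β, horig, hαβ, Or.inl ⟨?_, ?_, show prv (S:Set ℤ) β < β from hpβ2⟩⟩,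
      realize_fin hS⟩
    · show nxt (S : Set ℤ) (prv (S:Set ℤ) α) = α
      exact nxt_prv (Finset.mem_coe.mpr hαS) ⟨m, Finset.mem_coe.mpr (S.min'_mem hne), hmα⟩
    · show nxt (S : Set ℤ) (prv (S:Set ℤ) β) = β
      exact nxt_prv (Finset.mem_coe.mpr hβS) ⟨m, Finset.mem_coe.mpr (S.min'_mem hne), hβm⟩

/-- Every element of the infinite-cell part of the mutation admits a `GoodImage` bundle. -/
lemma goodImage_of_inf {U D : Set (ℤ × ℤ)} {f : ℤ → ℤ} (hf : IsInfiniteCell D f)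
    {k l : ℤ} (hkl : k + 2 ≤ l) (horig : (f k, f l) ∈ U) :
    GoodImage U D (Set.range f) (f (k - 1), f (l - 1)) := by
  have hmono := hf.1
  have harc : f (k-1) + 2 ≤ f (l-1) := by
    have := strictMono_int_add hmono (k-1) (l-1) (by omega)
    omega
  refine ⟨cellSet_of_infinite hf, ⟨k-1, rfl⟩, ⟨l-1, rfl⟩, harc,
    ⟨f k, f l, horig, hmono (by omega), Or.inl ⟨?_, ?_, hmono (by omega)⟩⟩, realize_inf hf⟩
  · simp only
    rw [nxt_range hmono, show k - 1 + 1 = k by ring]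
  · simp only
    rw [nxt_range hmono, show l - 1 + 1 = l by ring]

/-! ### Locating the endpoints of crossing mutated arcs -/

lemma endpoint_in_cell {U D : Set (ℤ × ℤ)} (hU : IsPtolemy U) (hD : D ⊆ core U)
    {S T : Set ℤ} (hS : IsCellSet D S) (hT : IsCellSet D T) {x y z w : ℤ}
    (hx : x ∈ S) (hy : y ∈ S) (hzT : z ∈ T) (hwT : w ∈ T)
    (hxz : x < z) (hzy : z < y) (hyw : y < w) : z ∈ S := by
  by_contra hzS
  obtain ⟨s, hsC, s', hs'C, hs1, hs2, hnb, hssD⟩ := gap_of_not_mem hS hx hy hxz hzy hzS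
  have hs'y : s' ≤ y := by
    by_contra hc
    exact hnb y hy ⟨by omega, by omega⟩
  exact no_cross_D hU hD hT hzT hwT hssD (Or.inr ⟨hs1, hs2, by omega⟩)

lemma endpoint_in_cell' {U D : Set (ℤ × ℤ)} (hU : IsPtolemy U) (hD : D ⊆ core U)
    {S T : Set ℤ} (hS : IsCellSet D S) (hT : IsCellSet D T) {x y z w : ℤ}
    (hx : x ∈ S) (hy : y ∈ S) (hwT : w ∈ T) (hzT : z ∈ T)
    (hwx : w < x) (hxz : x < z) (hzy : z < y) : z ∈ S := by
  by_contra hzS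
  obtain ⟨s, hsC, s', hs'C, hs1, hs2, hnb, hssD⟩ := gap_of_not_mem hS hx hy hxz hzy hzS
  have hxs : x ≤ s := by
    by_contra hc
    exact hnb x hx ⟨by omega, by omega⟩
  exact no_cross_D hU hD hT hwT hzT hssD (Or.inl ⟨by omega, hs1, hs2⟩)

lemma endpoint_in_cell_hi {U D : Set (ℤ × ℤ)} (hU : IsPtolemy U) (hD : D ⊆ core U)
    {S T : Set ℤ} (hS : IsCellSet D S) (hT : IsCellSet D T) {x y z w : ℤ}
    (hx : x ∈ S) (hy : y ∈ S) (hzT : z ∈ T) (hwT : w ∈ T)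
    (hxz : x < z) (hzy : z < y) (hyw : y < w) : w ∈ S := by
  by_contra hwS
  rcases hS.box with ⟨m, hm, M, hM, hbd, hdeg⟩ | ⟨hlo, hhi⟩
  · obtain ⟨e1, e2⟩ := hbd x hx
    obtain ⟨e3, e4⟩ := hbd y hy
    have hmM : (m, M) ∈ D := by
      rcases hdeg with h | h | h
      · omega
      · omega
      · exact h
    rcases lt_or_ge M w with hMw | hwM
    · exact no_cross_D hU hD hT hzT hwT hmM (Or.inr ⟨by omega, by omega, hMw⟩)
    · have hwM' : w < M := lt_of_le_of_ne hwM (fun h => hwS (h ▸ hM))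
      obtain ⟨s, hsC, s', hs'C, hs1, hs2, hnb, hssD⟩ := gap_of_not_mem hS hy hM hyw hwM' hwS
      have hys : y ≤ s := by
        by_contra hc
        exact hnb y hy ⟨by omega, by omega⟩
      exact no_cross_D hU hD hT hzT hwT hssD (Or.inl ⟨by omega, hs1, hs2⟩)
  · obtain ⟨Z, hZC, hZ⟩ := hhi w
    obtain ⟨s, hsC, s', hs'C, hs1, hs2, hnb, hssD⟩ := gap_of_not_mem hS hy hZC hyw hZ hwS
    have hys : y ≤ s := by
      by_contra hc
      exact hnb y hy ⟨by omega, by omega⟩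
    exact no_cross_D hU hD hT hzT hwT hssD (Or.inl ⟨by omega, hs1, hs2⟩)

lemma endpoint_in_cell_lo {U D : Set (ℤ × ℤ)} (hU : IsPtolemy U) (hD : D ⊆ core U)
    {S T : Set ℤ} (hS : IsCellSet D S) (hT : IsCellSet D T) {x y z w : ℤ}
    (hx : x ∈ S) (hy : y ∈ S) (hwT : w ∈ T) (hzT : z ∈ T)
    (hwx : w < x) (hxz : x < z) (hzy : z < y) : w ∈ S := by
  by_contra hwS
  rcases hS.box with ⟨m, hm, M, hM, hbd, hdeg⟩ | ⟨hlo, hhi⟩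
  · obtain ⟨e1, e2⟩ := hbd x hx
    obtain ⟨e3, e4⟩ := hbd y hy
    have hmM : (m, M) ∈ D := by
      rcases hdeg with h | h | h
      · omega
      · omega
      · exact h
    rcases lt_or_ge w m with hwm | hmw
    · exact no_cross_D hU hD hT hwT hzT hmM (Or.inl ⟨hwm, by omega, by omega⟩)
    · have hmw' : m < w := lt_of_le_of_ne hmw (fun h => hwS (h ▸ hm))
      obtain ⟨s, hsC, s', hs'C, hs1, hs2, hnb, hssD⟩ := gap_of_not_mem hS hm hx hmw' hwx hwS
      have hs'x : s' ≤ x := by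
        by_contra hc
        exact hnb x hx ⟨by omega, by omega⟩
      exact no_cross_D hU hD hT hwT hzT hssD (Or.inr ⟨hs1, hs2, by omega⟩)
  · obtain ⟨Z, hZC, hZ⟩ := hlo w
    obtain ⟨s, hsC, s', hs'C, hs1, hs2, hnb, hssD⟩ := gap_of_not_mem hS hZC hx hZ hwx hwS
    have hs'x : s' ≤ x := by
      by_contra hc
      exact hnb x hx ⟨by omega, by omega⟩
    exact no_cross_D hU hD hT hwT hzT hssD (Or.inr ⟨hs1, hs2, by omega⟩)

/-! ### Decomposition of the mutation -/

lemma goodImage_of_mem {U D : Set (ℤ × ℤ)} {p : ℤ × ℤ} (hp : p ∈ mutation U D) :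
    p ∈ D ∨ ∃ C : Set ℤ, GoodImage U D C p := by
  rcases hp with (hd | hfin) | hinf
  · exact Or.inl hd
  · obtain ⟨S, hS, α, β, horig, hint, hpe⟩ := hfin
    exact Or.inr ⟨(S : Set ℤ), hpe ▸ goodImage_of_fin hS horig hint⟩
  · obtain ⟨f, hf, k, l, hkl, horig, hpe⟩ := hinf
    exact Or.inr ⟨Set.range f, hpe ▸ goodImage_of_inf hf hkl horig⟩

lemma mutation_arc {U D : Set (ℤ × ℤ)} (hU : IsPtolemy U) (hD : D ⊆ core U) :
    ∀ p ∈ mutation U D, IsArc p.1 p.2 := by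
  intro p hp
  rcases goodImage_of_mem hp with hd | ⟨C, hg⟩
  · exact hU.1 p (D_subset_U hD hd)
  · exact hg.2.2.2.1

/-! ### The Ptolemy condition for the mutation -/

lemma mutation_ptolemy {U D : Set (ℤ × ℤ)} (hU : IsPtolemy U) (hD : D ⊆ core U) :
    ∀ a b c d : ℤ, (a, c) ∈ mutation U D → (b, d) ∈ mutation U D → a < b → b < c → c < d →
      (IsArc a b → (a, b) ∈ mutation U D) ∧ (IsArc b c → (b, c) ∈ mutation U D) ∧
      (IsArc c d → (c, d) ∈ mutation U D) ∧ (IsArc a d → (a, d) ∈ mutation U D) := by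
  intro a b c d h1 h2 hab hbc hcd
  rcases goodImage_of_mem h1 with hD1 | ⟨S, gS⟩
  · rcases goodImage_of_mem h2 with hD2 | ⟨T, gT⟩
    · exact (DD_nocross hD hD1 hD2 (Or.inl ⟨hab, hbc, hcd⟩)).elim
    · obtain ⟨hT, hbT, hdT, -, -, -⟩ := gT
      simp only at hbT hdT
      exact (no_cross_D hU hD hT hbT hdT hD1 (Or.inr ⟨hab, hbc, hcd⟩)).elim
  rcases goodImage_of_mem h2 with hD2 | ⟨T, gT⟩
  · obtain ⟨hS, haS, hcS, -, -, -⟩ := gS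
    simp only at haS hcS
    exact (no_cross_D hU hD hS haS hcS hD2 (Or.inl ⟨hab, hbc, hcd⟩)).elim
  obtain ⟨hS, haS, hcS, harcS, ⟨α, β, horigS, hαβ, hdisjS⟩, hrealS⟩ := gS
  obtain ⟨hT, hbT, hdT, harcT, ⟨α', β', horigT, hαβ', hdisjT⟩, hrealT⟩ := gT
  simp only at haS hcS harcS hbT hdT harcT hdisjS hdisjT
  -- all four endpoints lie in both cells
  have hbS : b ∈ S := endpoint_in_cell hU hD hS hT haS hcS hbT hdT hab hbc hcd
  have hcT : c ∈ T := endpoint_in_cell' hU hD hT hS hbT hdT haS hcS hab hbc hcd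
  have hdS : d ∈ S := endpoint_in_cell_hi hU hD hS hT haS hcS hbT hdT hab hbc hcd
  have haT : a ∈ T := endpoint_in_cell_lo hU hD hT hS hbT hdT haS hcS hab hbc hcd
  -- p cannot be a wrapped image
  have hpnormal : nxt S a = α ∧ nxt S c = β ∧ c < β := by
    rcases hdisjS with h | ⟨-, -, hmax, -, -⟩
    · exact h
    · exact absurd (hmax d hdS) (not_le.mpr hcd)
  -- successors agree on the common part
  have hA1 : nxt S a = nxt T a :=
    nxt_agree hU hD hS hT haS haT hbS hbT hcS hcT (by omega) (by omega) (by omega)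
      ⟨c, hcS, by omega⟩ ⟨b, hbT, hab⟩
  have hA2 : nxt S c = nxt T c :=
    nxt_agree hU hD hS hT hcS hcT haS haT hbS hbT (by omega) (by omega) (by omega)
      ⟨d, hdS, hcd⟩ ⟨d, hdT, hcd⟩
  have hA : (nxt T a, nxt T c) ∈ U := by
    rw [← hA1, ← hA2, hpnormal.1, hpnormal.2.1]
    exact horigS
  -- basic successor facts in T
  obtain ⟨hnaT, hana, hnamin⟩ := nxt_spec (C := T) (v := a) ⟨b, hbT, hab⟩
  obtain ⟨hnbT, hbnb, hnbmin⟩ := nxt_spec (C := T) (v := b) ⟨c, hcT, hbc⟩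
  obtain ⟨hncT, hcnc, hncmin⟩ := nxt_spec (C := T) (v := c) ⟨d, hdT, hcd⟩
  have hnab : nxt T a ≤ b := hnamin b hbT hab
  have hnbc : nxt T b ≤ c := hnbmin c hcT hbc
  have hncd : nxt T c ≤ d := hncmin d hdT hcd
  have hcβ : c < nxt T c := hcnc
  rcases hdisjT with ⟨f1, f2, f3⟩ | ⟨f1, f2, f3, f4, f5⟩
  · -- q is a regular image: originals (nxt T a, nxt T c) and (nxt T b, β') cross
    have hB : (nxt T b, β') ∈ U := f1 ▸ horigT
    have hdβ' : d < β' := f3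
    have hP := hU.2.1 (nxt T a) (nxt T b) (nxt T c) β' hA hB (by omega) (by omega) (by omega)
    refine ⟨fun h => hrealT a b haT hbT hab h (fun harc' => ?_),
      fun h => hrealT b c hbT hcT hbc h (fun harc' => ?_),
      fun h => hrealT c d hcT hdT hcd h (fun harc' => ?_),
      fun h => hrealT a d haT hdT (by omega) h (fun harc' => ?_)⟩
    · rw [min_eq_left (by omega), max_eq_right (by omega)] at harc'
      rw [ordPair_eq (by omega)]
      exact hP.1 harc'
    · rw [min_eq_left (by omega), max_eq_right (by omega)] at harc'
      rw [ordPair_eq (by omega)]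
      exact hP.2.1 harc'
    · rw [f2] at harc' ⊢
      rw [min_eq_left (by omega), max_eq_right (by omega)] at harc'
      rw [ordPair_eq (by omega)]
      exact hP.2.2.1 harc'
    · rw [f2] at harc' ⊢
      rw [min_eq_left (by omega), max_eq_right (by omega)] at harc'
      rw [ordPair_eq (by omega)]
      exact hP.2.2.2 harc'
  · -- q is a wrapped image
    have hnbβ' : nxt T b = β' := f1
    have hndα' : nxt T d = α' := by
      apply nxt_wrap
      · rintro ⟨w, hw, hlt⟩
        exact absurd (f3 w hw) (not_le.mpr hlt)
      · exact ⟨f4, f5⟩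
    have hα'a : α' ≤ a := f5 a haT
    have hP := hU.2.1 α' (nxt T a) β' (nxt T c) horigT hA (by omega) (by omega) (by omega)
    refine ⟨fun h => hrealT a b haT hbT hab h (fun harc' => ?_),
      fun h => hrealT b c hbT hcT hbc h (fun harc' => ?_),
      fun h => hrealT c d hcT hdT hcd h (fun harc' => ?_),
      fun h => hrealT a d haT hdT (by omega) h (fun harc' => ?_)⟩
    · rw [hnbβ'] at harc' ⊢
      rw [min_eq_left (by omega), max_eq_right (by omega)] at harc'
      rw [ordPair_eq (by omega)]
      exact hP.2.1 harc'
    · rw [hnbβ'] at harc' ⊢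
      rw [min_eq_left (by omega), max_eq_right (by omega)] at harc'
      rw [ordPair_eq (by omega)]
      exact hP.2.2.1 harc'
    · rw [hndα'] at harc' ⊢
      rw [min_eq_right (by omega), max_eq_left (by omega)] at harc'
      rw [ordPair, min_eq_right (by omega), max_eq_left (by omega)]
      exact hP.2.2.2 harc'
    · rw [hndα'] at harc' ⊢
      rw [min_eq_right (by omega), max_eq_left (by omega)] at harc'
      rw [ordPair, min_eq_right (by omega), max_eq_left (by omega)]
      exact hP.1 harc'

/-! ### Helpers about infinite sets of integers -/

lemma exists_lt_of_infinite {A : Set ℤ} (h : A.Infinite) {K : ℤ} (hb : ∀ x ∈ A, x ≤ K)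
    (N : ℤ) : ∃ x ∈ A, x < N := by
  by_contra hc
  push_neg at hc
  exact h (Set.Finite.subset (Set.finite_Icc N K) (fun x hx => ⟨hc x hx, hb x hx⟩))

lemma exists_gt_of_infinite {A : Set ℤ} (h : A.Infinite) {K : ℤ} (hb : ∀ x ∈ A, K ≤ x)
    (N : ℤ) : ∃ x ∈ A, N < x := by
  by_contra hc
  push_neg at hc
  exact h (Set.Finite.subset (Set.finite_Icc K N) (fun x hx => ⟨hb x hx, hc x hx⟩))

lemma infinite_pigeonhole {A : Set ℤ} (hA : A.Infinite) {I : Set ℤ} (hI : I.Finite)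
    {f : ℤ → Set ℤ} (hsub : A ⊆ ⋃ i ∈ I, f i) : ∃ i ∈ I, (A ∩ f i).Infinite := by
  by_contra hc
  push_neg at hc
  try simp only [Set.not_infinite] at hc
  apply hA
  have : A ⊆ ⋃ i ∈ I, (A ∩ f i) := by
    intro x hx
    obtain ⟨i, hi, hfi⟩ := Set.mem_iUnion₂.mp (hsub hx)
    exact Set.mem_iUnion₂.mpr ⟨i, hi, hx, hfi⟩
  exact Set.Finite.subset (Set.Finite.biUnion hI (fun i hi => hc i hi)) this

/-! ### Fountains of `D` are unique -/

lemma right_fountain_eq {U D : Set (ℤ × ℤ)} (hU : IsPtolemy U) (hD : D ⊆ core U)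
    {n₀ : ℤ} (hL : IsLeftFountain D n₀) (hR : IsRightFountain D n₀) {n : ℤ}
    (hn : IsRightFountain D n) : n = n₀ := by
  by_contra hne
  have harcL : ∀ x ∈ {m : ℤ | (m, n₀) ∈ D}, x ≤ n₀ := fun x hx => by
    have := D_arc hU hD hx; omega
  have harcR : ∀ x ∈ {p : ℤ | (n₀, p) ∈ D}, n₀ ≤ x := fun x hx => by
    have := D_arc hU hD hx; omega
  have harcN : ∀ x ∈ {p : ℤ | (n, p) ∈ D}, n ≤ x := fun x hx => by
    have := D_arc hU hD hx; omega
  rcases lt_or_gt_of_ne hne with h | h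
  · -- n < n₀
    obtain ⟨m', hm', hm'lt⟩ := exists_lt_of_infinite hL harcL n
    obtain ⟨p, hp, hplt⟩ := exists_gt_of_infinite hn harcN n₀
    exact DD_nocross hD hp hm' (Or.inr ⟨hm'lt, h, hplt⟩)
  · -- n₀ < n
    obtain ⟨p', hp', hp'lt⟩ := exists_gt_of_infinite hR harcR n
    obtain ⟨p, hp, hplt⟩ := exists_gt_of_infinite hn harcN p'
    exact DD_nocross hD hp' hp (Or.inl ⟨h, hp'lt, hplt⟩)

lemma left_fountain_eq {U D : Set (ℤ × ℤ)} (hU : IsPtolemy U) (hD : D ⊆ core U)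
    {n₀ : ℤ} (hL : IsLeftFountain D n₀) (hR : IsRightFountain D n₀) {n : ℤ}
    (hn : IsLeftFountain D n) : n = n₀ := by
  by_contra hne
  have harcL : ∀ x ∈ {m : ℤ | (m, n₀) ∈ D}, x ≤ n₀ := fun x hx => by
    have := D_arc hU hD hx; omega
  have harcR : ∀ x ∈ {p : ℤ | (n₀, p) ∈ D}, n₀ ≤ x := fun x hx => by
    have := D_arc hU hD hx; omega
  have harcN : ∀ x ∈ {m : ℤ | (m, n) ∈ D}, x ≤ n := fun x hx => by
    have := D_arc hU hD hx; omega
  rcases lt_or_gt_of_ne hne with h | h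
  · -- n < n₀
    obtain ⟨m', hm', hm'lt⟩ := exists_lt_of_infinite hL harcL n
    obtain ⟨m, hm, hmlt⟩ := exists_lt_of_infinite hn harcN m'
    exact DD_nocross hD hm hm' (Or.inl ⟨hmlt, hm'lt, h⟩)
  · -- n₀ < n
    obtain ⟨p', hp', hp'lt⟩ := exists_gt_of_infinite hR harcR n
    obtain ⟨m, hm, hmlt⟩ := exists_lt_of_infinite hn harcN n₀
    exact DD_nocross hD hm hp' (Or.inl ⟨hmlt, h, hp'lt⟩)

/-! ### The outermost property -/

/-- If `n` and `c` are consecutive vertices of a cell which continues past `c`, then no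
arc of `D` ends at `c` from further left than `n`. -/
lemma outermost {U D : Set (ℤ × ℤ)} (hU : IsPtolemy U) (hD : D ⊆ core U) {C : Set ℤ}
    (hC : IsCellSet D C) {n c : ℤ} (hn : n ∈ C) (hc : c ∈ C) (hnc : n < c)
    (hcons : ∀ u ∈ C, ¬(n < u ∧ u < c)) (hup : ∃ w ∈ C, c < w) {z : ℤ}
    (hz : z < n) (hzD : (z, c) ∈ D) : False := by
  obtain ⟨w₀, hw₀, hcw₀⟩ := hup
  by_cases hzC : z ∈ C
  · exact hC.nonbdry z hzC c hc (by omega) ⟨n, hn, hz, hnc⟩ (Or.inr ⟨w₀, hw₀, hcw₀⟩) hzD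
  · rcases hC.box with ⟨m, hm, M, hM, hbd, hdeg⟩ | ⟨hlo, hhi⟩
    · obtain ⟨e1, e2⟩ := hbd n hn
      obtain ⟨e3, e4⟩ := hbd c hc
      obtain ⟨e5, e6⟩ := hbd w₀ hw₀
      rcases lt_or_ge z m with hzm | hmz
      · have hmM : (m, M) ∈ D := by
          rcases hdeg with h | h | h
          · omega
          · omega
          · exact h
        exact DD_nocross hD hzD hmM (Or.inl ⟨hzm, by omega, by omega⟩)
      · have hmz' : m < z := lt_of_le_of_ne hmz (fun h => hzC (h ▸ hm))
        obtain ⟨s, hsC, s', hs'C, hs1, hs2, hnb, hssD⟩ := gap_of_not_mem hC hm hn hmz' hz hzC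
        have hs'n : s' ≤ n := by
          by_contra hcon
          exact hnb n hn ⟨by omega, by omega⟩
        exact DD_nocross hD hzD hssD (Or.inr ⟨hs1, hs2, by omega⟩)
    · obtain ⟨Z, hZC, hZ⟩ := hlo z
      obtain ⟨s, hsC, s', hs'C, hs1, hs2, hnb, hssD⟩ := gap_of_not_mem hC hZC hn hZ hz hzC
      have hs'n : s' ≤ n := by
        by_contra hcon
        exact hnb n hn ⟨by omega, by omega⟩
      exact DD_nocross hD hzD hssD (Or.inr ⟨hs1, hs2, by omega⟩)

/-! ### Minimal covers and maximal arcs -/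

lemma exists_min_cover {U D : Set (ℤ × ℤ)} (hD : D ⊆ core U) {m c : ℤ} (hmc : m < c)
    (hex : ∃ u w, (u, w) ∈ D ∧ u ≤ m ∧ c ≤ w) :
    ∃ u w, (u, w) ∈ D ∧ u ≤ m ∧ c ≤ w ∧
      ∀ s t, (s, t) ∈ D → s ≤ m → c ≤ t → s ≤ u ∧ w ≤ t := by
  obtain ⟨u₀, w₀, h₀⟩ := hex
  obtain ⟨u, ⟨w₁, hw₁, hum, hcw₁⟩, humax⟩ := Int.exists_greatest_of_bdd
    (P := fun s => ∃ t, (s, t) ∈ D ∧ s ≤ m ∧ c ≤ t)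
    ⟨m, fun s hs => hs.choose_spec.2.1⟩ ⟨u₀, w₀, h₀⟩
  obtain ⟨w, ⟨huw, hcw⟩, hwmin⟩ := Int.exists_least_of_bdd
    (P := fun t => (u, t) ∈ D ∧ c ≤ t)
    ⟨c, fun t ht => ht.2⟩ ⟨w₁, hw₁, hcw₁⟩
  refine ⟨u, w, huw, hum, hcw, fun s t hst hsm hct => ?_⟩
  have hsu : s ≤ u := humax s ⟨t, hst, hsm, hct⟩
  refine ⟨hsu, ?_⟩
  by_contra hcon
  push_neg at hcon
  rcases eq_or_lt_of_le hsu with h | h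
  · subst h
    exact absurd (hwmin t ⟨hst, hct⟩) (not_le.mpr hcon)
  · exact DD_nocross hD huw hst (Or.inr ⟨h, by omega, hcon⟩)

lemma exists_max_arc {U D : Set (ℤ × ℤ)} (hD : D ⊆ core U) {z vL vR : ℤ}
    {A : Set (ℤ × ℤ)} (hAD : A ⊆ D) (hmem : ∀ q ∈ A, q.1 < z ∧ z < q.2)
    (hbd : ∀ q ∈ A, vL ≤ q.1 ∧ q.2 ≤ vR) (hne : A.Nonempty) :
    ∃ s t, (s, t) ∈ A ∧ ∀ q ∈ A, s ≤ q.1 ∧ q.2 ≤ t := by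
  obtain ⟨q₀, hq₀⟩ := hne
  obtain ⟨t, ⟨s₁, hs₁⟩, htmax⟩ := Int.exists_greatest_of_bdd
    (P := fun t => ∃ s, (s, t) ∈ A)
    ⟨vR, fun t ⟨s, hs⟩ => (hbd (s, t) hs).2⟩ ⟨q₀.2, q₀.1, by simpa using hq₀⟩
  obtain ⟨s, hs, hsmin⟩ := Int.exists_least_of_bdd
    (P := fun s => (s, t) ∈ A)
    ⟨vL, fun s hs => (hbd (s, t) hs).1⟩ ⟨s₁, hs₁⟩
  refine ⟨s, t, hs, fun q hq => ?_⟩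
  have hqt : q.2 ≤ t := htmax q.2 ⟨q.1, by simpa using hq⟩
  refine ⟨?_, hqt⟩
  by_contra hcon
  push_neg at hcon
  rcases eq_or_lt_of_le hqt with h | h
  · have : (q.1, t) ∈ A := by
      have : (q.1, q.2) = q := rfl
      rw [← h]
      simpa using hq
    exact absurd (hsmin q.1 this) (not_le.mpr hcon)
  · obtain ⟨h1, h2⟩ := hmem q hq
    obtain ⟨h3, h4⟩ := hmem (s, t) hs
    exact DD_nocross hD (hAD hs) (hAD hq) (Or.inr ⟨hcon, by omega, h⟩)

/-! ### The finite face below a minimal cover -/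

open Classical in
noncomputable def face (D : Set (ℤ × ℤ)) (u w : ℤ) : Finset ℤ :=
  (Finset.Icc u w).filter
    (fun v => ¬ ∃ s t, (s, t) ∈ D ∧ (s, t) ≠ (u, w) ∧ u ≤ s ∧ t ≤ w ∧ s < v ∧ v < t)

lemma mem_face_iff {D : Set (ℤ × ℤ)} {u w v : ℤ} :
    v ∈ face D u w ↔ (u ≤ v ∧ v ≤ w) ∧
      ¬ ∃ s t, (s, t) ∈ D ∧ (s, t) ≠ (u, w) ∧ u ≤ s ∧ t ≤ w ∧ s < v ∧ v < t := by
  simp [face, Finset.mem_filter, Finset.mem_Icc, and_assoc]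

lemma face_mem_ends {U D : Set (ℤ × ℤ)} (hU : IsPtolemy U) (hD : D ⊆ core U) {u w : ℤ}
    (huw : (u, w) ∈ D) : u ∈ face D u w ∧ w ∈ face D u w := by
  have harc := D_arc hU hD huw
  constructor
  · rw [mem_face_iff]
    exact ⟨⟨le_refl u, by omega⟩, fun ⟨s, t, _, _, hus, _, hsv, _⟩ => by omega⟩
  · rw [mem_face_iff]
    exact ⟨⟨by omega, le_refl w⟩, fun ⟨s, t, _, _, _, htw, _, hvt⟩ => by omega⟩

lemma face_gap {U D : Set (ℤ × ℤ)} (hU : IsPtolemy U) (hD : D ⊆ core U) {u w : ℤ}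
    (huw : (u, w) ∈ D) {v v' : ℤ} (hv : v ∈ face D u w) (hv' : v' ∈ face D u w)
    (hvv' : v < v') (hcons : ∀ x ∈ face D u w, ¬(v < x ∧ x < v'))
    (hne : v' ≠ v + 1) : (v, v') ∈ D := by
  have hvm := mem_face_iff.mp hv
  have hv'm := mem_face_iff.mp hv'
  set v'' := v + 1 with hv''
  have hv''mem : ¬ v'' ∈ face D u w := fun h => hcons v'' h ⟨by omega, by omega⟩
  have hv''cov : ∃ s t, (s, t) ∈ D ∧ (s, t) ≠ (u, w) ∧ u ≤ s ∧ t ≤ w ∧ s < v'' ∧ v'' < t := by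
    by_contra hc
    exact hv''mem (mem_face_iff.mpr ⟨⟨by omega, by omega⟩, hc⟩)
  obtain ⟨s₀, t₀, h₀⟩ := hv''cov
  obtain ⟨s, t, hst, hstmax₀⟩ := exists_max_arc (U := U) hD
    (A := {q : ℤ × ℤ | q ∈ D ∧ q ≠ (u, w) ∧ u ≤ q.1 ∧ q.2 ≤ w ∧ q.1 < v'' ∧ v'' < q.2})
    (z := v'') (vL := u) (vR := w)
    (fun q hq => hq.1) (fun q hq => ⟨hq.2.2.2.2.1, hq.2.2.2.2.2⟩)
    (fun q hq => ⟨hq.2.2.1, hq.2.2.2.1⟩)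
    ⟨(s₀, t₀), h₀.1, h₀.2.1, h₀.2.2.1, h₀.2.2.2.1, h₀.2.2.2.2.1, h₀.2.2.2.2.2⟩
  have hstmax : ∀ s' t', (s', t') ∈ D → (s', t') ≠ (u, w) → u ≤ s' → t' ≤ w →
      s' < v'' → v'' < t' → s ≤ s' ∧ t' ≤ t := by
    intro s' t' a b c' d e f
    exact hstmax₀ (s', t') ⟨a, b, c', d, e, f⟩
  obtain ⟨hstD, hstne, hus, htw, hsv'', hv''t⟩ := hst
  simp only at hus htw hsv'' hv''t
  -- s is in the face
  have hsface : s ∈ face D u w := by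
    rw [mem_face_iff]
    refine ⟨⟨hus, by omega⟩, ?_⟩
    rintro ⟨s', t', hs'D, hs'ne, hus', ht'w, h1, h2⟩
    have ht't : t' ≥ t := by
      by_contra hcon
      push_neg at hcon
      exact DD_nocross hD hs'D hstD (Or.inl ⟨h1, h2, by omega⟩)
    have := (hstmax s' t' hs'D hs'ne hus' ht'w (by omega) (by omega)).1
    omega
  -- t is in the face
  have htface : t ∈ face D u w := by
    rw [mem_face_iff]
    refine ⟨⟨by omega, htw⟩, ?_⟩
    rintro ⟨s', t', hs'D, hs'ne, hus', ht'w, h1, h2⟩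
    have hs's : s' ≤ s := by
      by_contra hcon
      push_neg at hcon
      exact DD_nocross hD hstD hs'D (Or.inl ⟨hcon, h1, h2⟩)
    have := (hstmax s' t' hs'D hs'ne hus' ht'w (by omega) (by omega)).2
    omega
  -- s = v and t = v'
  have hsv : s = v := by
    have hsle : s ≤ v := by omega
    rcases eq_or_lt_of_le hsle with h | h
    · exact h
    · exfalso
      have := mem_face_iff.mp hv
      exact this.2 ⟨s, t, hstD, hstne, hus, htw, h, by omega⟩
  have htv' : t = v' := by
    have hge : v' ≤ t := by
      by_contra hcon
      push_neg at hcon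
      exact hcons t htface ⟨by omega, hcon⟩
    rcases eq_or_lt_of_le hge with h | h
    · exact h.symm
    · exfalso
      have := mem_face_iff.mp hv'
      exact this.2 ⟨s, t, hstD, hstne, hus, htw, by omega, h⟩
  rw [← hsv, ← htv']
  exact hstD

lemma face_cell {U D : Set (ℤ × ℤ)} (hU : IsPtolemy U) (hD : D ⊆ core U) {u w : ℤ}
    (huw : (u, w) ∈ D) : IsFiniteCell D (face D u w) := by
  obtain ⟨hu, hw⟩ := face_mem_ends hU hD huw
  have harc := D_arc hU hD huw
  refine ⟨⟨u, hu⟩, ?_, ?_⟩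
  · rintro a b ⟨ha, hb, hab, hcase | hcase⟩
    · by_cases he : b = a + 1
      · exact Or.inl he
      · exact Or.inr (face_gap hU hD huw ha hb hab (fun x hx hh => hcase x hx hh) he)
    · have hau : a = u := le_antisymm ((hcase u hu).1) ((mem_face_iff.mp ha).1.1)
      have hbw : b = w := le_antisymm ((mem_face_iff.mp hb).1.2) ((hcase w hw).2)
      rw [hau, hbw]
      exact Or.inr huw
  · intro a ha b hb hab hnbd habD
    have hneq : (a, b) ≠ (u, w) := by
      intro h
      rw [Prod.mk.injEq] at h
      exact hnbd ⟨ha, hb, hab, Or.inr (fun x hx =>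
        ⟨h.1 ▸ (mem_face_iff.mp hx).1.1, h.2 ▸ (mem_face_iff.mp hx).1.2⟩)⟩
    obtain ⟨⟨x, hx, hx1, hx2⟩, -⟩ := (not_cellBoundary_iff ha hb hab).mp hnbd
    exact (mem_face_iff.mp hx).2 ⟨a, b, habD, hneq, (mem_face_iff.mp ha).1.1,
      (mem_face_iff.mp hb).1.2, hx1, hx2⟩

/-! ### The covered case: producing an arc of the mutation ending at `n` -/

lemma covered_case {U D : Set (ℤ × ℤ)} (hU : IsPtolemy U) (hD : D ⊆ core U)
    {m n c : ℤ} (hmn : m < n) (hnc : n < c) (hmcU : (m, c) ∈ U) (hmcD : (m, c) ∉ D)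
    (hcedge : c = n + 1 ∨ (n, c) ∈ D) (houter : ∀ z, z < n → (z, c) ∉ D)
    {u w : ℤ} (huw : (u, w) ∈ D) (hum : u ≤ m) (hcw : c ≤ w)
    (hmin : ∀ s t, (s, t) ∈ D → s ≤ m → c ≤ t → s ≤ u ∧ w ≤ t) (hune : u ≠ m) :
    ∃ v, v < m ∧ (v = m - 1 ∨ (v, m) ∈ D) ∧ (v, n) ∈ mutation U D := by
  have hcell := face_cell hU hD huw
  obtain ⟨hu, hw⟩ := face_mem_ends hU hD huw
  have harcuw := D_arc hU hD huw
  have hum' : u < m := lt_of_le_of_ne hum hune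
  -- m is in the face
  have hmF : m ∈ face D u w := by
    rw [mem_face_iff]
    refine ⟨⟨hum, by omega⟩, ?_⟩
    rintro ⟨s, t, hsD, hsne, hus, htw, h1, h2⟩
    rcases lt_or_ge t c with hct | hct
    · exact D_nocross hD hsD hmcU (Or.inl ⟨h1, h2, hct⟩)
    · obtain ⟨l1, l2⟩ := hmin s t hsD (by omega) hct
      exact hsne (by rw [Prod.mk.injEq]; omega)
  -- c is in the face
  have hcF : c ∈ face D u w := by
    rw [mem_face_iff]
    refine ⟨⟨by omega, hcw⟩, ?_⟩
    rintro ⟨s, t, hsD, hsne, hus, htw, h1, h2⟩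
    rcases lt_or_ge s m with hsm | hsm
    · obtain ⟨l1, l2⟩ := hmin s t hsD (by omega) (by omega)
      exact hsne (by rw [Prod.mk.injEq]; omega)
    rcases eq_or_lt_of_le hsm with hsm' | hsm'
    · obtain ⟨l1, l2⟩ := hmin s t hsD (by omega) (by omega)
      omega
    rcases lt_or_ge s n with hsn | hsn
    · exact D_nocross hD hsD hmcU (Or.inr ⟨hsm', hsn.trans hnc, h2⟩)
    rcases eq_or_lt_of_le hsn with hsn' | hsn'
    · exact D_nocross hD hsD hmcU (Or.inr ⟨by omega, by omega, h2⟩)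
    · rcases hcedge with he | hnD
      · omega
      · exact DD_nocross hD hnD hsD (Or.inl ⟨by omega, by omega, h2⟩)
  -- n is in the face
  have hnF : n ∈ face D u w := by
    rw [mem_face_iff]
    refine ⟨⟨by omega, by omega⟩, ?_⟩
    rintro ⟨s, t, hsD, hsne, hus, htw, h1, h2⟩
    rcases lt_or_ge t c with hct | hct
    · -- t < c, so n < t < c
      rcases hcedge with he | hnD
      · omega
      · exact DD_nocross hD hnD hsD (Or.inr ⟨h1, h2, hct⟩)
    · rcases lt_or_ge s m with hsm | hsm
      · obtain ⟨l1, l2⟩ := hmin s t hsD (by omega) hct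
        exact hsne (by rw [Prod.mk.injEq]; omega)
      rcases eq_or_lt_of_le hsm with hsm' | hsm'
      · obtain ⟨l1, l2⟩ := hmin s t hsD (by omega) hct
        omega
      · rcases eq_or_lt_of_le hct with hct' | hct'
        · exact houter s (by omega) (by rw [hct']; exact hsD)
        · exact D_nocross hD hsD hmcU (Or.inr ⟨hsm', by omega, hct'⟩)
  -- the face has no element strictly between n and c
  have hgap : ∀ x ∈ face D u w, ¬ (n < x ∧ x < c) := by
    rintro x hx ⟨h1, h2⟩
    rcases hcedge with he | hnD
    · omega
    · refine (mem_face_iff.mp hx).2 ⟨n, c, hnD, ?_, by omega, by omega, h1, h2⟩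
      simp only [ne_eq, Prod.mk.injEq, not_and]
      omega
  have hne := hcell.1
  -- predecessor computations
  have hpc : cellPred (face D u w) c = n := by
    rw [cellPred_eq_prv hne]
    obtain ⟨p1, p2, p3⟩ := prv_spec (C := ((face D u w : Finset ℤ) : Set ℤ)) (v := c)
      ⟨n, Finset.mem_coe.mpr hnF, hnc⟩
    have l1 : n ≤ prv ((face D u w : Finset ℤ) : Set ℤ) c := p3 n (Finset.mem_coe.mpr hnF) hnc
    rcases eq_or_lt_of_le l1 with h | h
    · exact h.symm
    · exact absurd (hgap _ (Finset.mem_coe.mp p1) ⟨h, p2⟩) (fun hq => hq)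
  obtain ⟨q1, q2, q3⟩ := prv_spec (C := ((face D u w : Finset ℤ) : Set ℤ)) (v := m)
    ⟨u, Finset.mem_coe.mpr hu, hum'⟩
  set v := prv ((face D u w : Finset ℤ) : Set ℤ) m with hv
  have hpm : cellPred (face D u w) m = v := cellPred_eq_prv hne m
  -- (v, m) is an edge or in D
  have hvm : v = m - 1 ∨ (v, m) ∈ D := by
    have hbdry : CellBoundaryPair (face D u w) v m :=
      ⟨Finset.mem_coe.mp q1, hmF, q2, Or.inl (fun x hx ⟨l1, l2⟩ =>
        absurd (q3 x (Finset.mem_coe.mpr hx) l2) (not_le.mpr l1))⟩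
    rcases hcell.2.1 v m hbdry with he | hd
    · left; rw [IsEdge] at he; omega
    · right; exact hd
  -- (m, c) is interior
  have hint : FiniteInterior (face D u w) m c := by
    refine ⟨hmF, hcF, by omega, ?_⟩
    rintro ⟨-, -, -, hcase | hcase⟩
    · exact hcase n hnF ⟨hmn, hnc⟩
    · exact absurd ((hcase u hu).1) (not_le.mpr hum')
  refine ⟨v, q2, hvm, Or.inl (Or.inr ⟨face D u w, hcell, m, c, hmcU, hint, ?_⟩)⟩
  rw [hpm, hpc, ordPair_eq (by omega)]

/-! ### The outer face -/

def outerSet (D : Set (ℤ × ℤ)) : Set ℤ := {v | ¬ ∃ s t, (s, t) ∈ D ∧ s < v ∧ v < t}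

lemma outer_gap {U D : Set (ℤ × ℤ)} (hD : D ⊆ core U) {v v' : ℤ}
    (hv : v ∈ outerSet D) (hv' : v' ∈ outerSet D) (hvv' : v < v')
    (hcons : ∀ x ∈ outerSet D, ¬(v < x ∧ x < v')) (hne : v' ≠ v + 1) : (v, v') ∈ D := by
  set v'' := v + 1 with hv''def
  have hv''cov : ∃ s t, (s, t) ∈ D ∧ s < v'' ∧ v'' < t := by
    by_contra hc
    exact hcons v'' hc ⟨by omega, by omega⟩
  -- every covering arc of v'' has endpoints in [v, v']
  have hbound : ∀ s t, (s, t) ∈ D → s < v'' → v'' < t → v ≤ s ∧ t ≤ v' := by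
    intro s t hst h1 h2
    constructor
    · by_contra hc
      push_neg at hc
      exact hv ⟨s, t, hst, hc, by omega⟩
    · by_contra hc
      push_neg at hc
      exact hv' ⟨s, t, hst, by omega, hc⟩
  obtain ⟨s₀, t₀, h₀⟩ := hv''cov
  obtain ⟨s, t, hst, hstmax₀⟩ := exists_max_arc (U := U) hD
    (A := {q : ℤ × ℤ | q ∈ D ∧ q.1 < v'' ∧ v'' < q.2}) (z := v'') (vL := v) (vR := v')
    (fun q hq => hq.1) (fun q hq => ⟨hq.2.1, hq.2.2⟩)
    (fun q hq => hbound q.1 q.2 hq.1 hq.2.1 hq.2.2) ⟨(s₀, t₀), h₀.1, h₀.2.1, h₀.2.2⟩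
  have hstmax : ∀ s' t', (s', t') ∈ D → s' < v'' → v'' < t' → s ≤ s' ∧ t' ≤ t := by
    intro s' t' a b c'
    exact hstmax₀ (s', t') ⟨a, b, c'⟩
  obtain ⟨hstD, hsv'', hv''t⟩ := hst
  simp only at hsv'' hv''t
  obtain ⟨hvs, htv'⟩ := hbound s t hstD hsv'' hv''t
  have hsv : s = v := by omega
  -- t is in the outer set
  have htout : t ∈ outerSet D := by
    rintro ⟨s', t', hs'D, h1, h2⟩
    have hs's : s ≤ s' := by
      by_contra hcon
      push_neg at hcon
      exact hv ⟨s', t', hs'D, by omega, by omega⟩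
    rcases lt_or_ge s' v'' with h3 | h3
    · exact absurd ((hstmax s' t' hs'D h3 (by omega)).2) (not_le.mpr h2)
    · exact DD_nocross hD hstD hs'D (Or.inl ⟨by omega, h1, h2⟩)
  have htv'' : t = v' := by
    rcases eq_or_lt_of_le htv' with h | h
    · exact h
    · exact absurd ⟨by omega, h⟩ (hcons t htout)
  rw [← hsv, ← htv'']
  exact hstD

/-! ### Enumeration of an unbounded set -/

noncomputable def upSeq (A : Set ℤ) (c₀ : ℤ) : ℕ → ℤ
  | 0 => c₀
  | (k+1) => nxt A (upSeq A c₀ k)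

noncomputable def dnSeq (A : Set ℤ) (c₀ : ℤ) : ℕ → ℤ
  | 0 => c₀
  | (k+1) => prv A (dnSeq A c₀ k)

noncomputable def enum (A : Set ℤ) (c₀ : ℤ) (z : ℤ) : ℤ :=
  if 0 ≤ z then upSeq A c₀ z.toNat else dnSeq A c₀ (-z).toNat

section Enum

variable {A : Set ℤ} {c₀ : ℤ} (hc₀ : c₀ ∈ A)
  (hlo : ∀ N : ℤ, ∃ v ∈ A, v < N) (hhi : ∀ N : ℤ, ∃ v ∈ A, N < v)

include hc₀ hhi in
lemma upSeq_mem : ∀ k, upSeq A c₀ k ∈ A := by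
  intro k
  induction k with
  | zero => exact hc₀
  | succ n ih =>
    obtain ⟨w, hw, hlt⟩ := hhi (upSeq A c₀ n)
    exact (nxt_spec ⟨w, hw, hlt⟩).1

include hc₀ hhi in
lemma upSeq_step (k : ℕ) : upSeq A c₀ k < upSeq A c₀ (k+1) ∧
    ∀ x ∈ A, upSeq A c₀ k < x → upSeq A c₀ (k+1) ≤ x := by
  obtain ⟨w, hw, hlt⟩ := hhi (upSeq A c₀ k)
  obtain ⟨h1, h2, h3⟩ := nxt_spec ⟨w, hw, hlt⟩
  exact ⟨h2, h3⟩

include hc₀ hlo in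
lemma dnSeq_mem : ∀ k, dnSeq A c₀ k ∈ A := by
  intro k
  induction k with
  | zero => exact hc₀
  | succ n ih =>
    obtain ⟨w, hw, hlt⟩ := hlo (dnSeq A c₀ n)
    exact (prv_spec ⟨w, hw, hlt⟩).1

include hc₀ hlo in
lemma dnSeq_step (k : ℕ) : dnSeq A c₀ (k+1) < dnSeq A c₀ k ∧
    ∀ x ∈ A, x < dnSeq A c₀ k → x ≤ dnSeq A c₀ (k+1) := by
  obtain ⟨w, hw, hlt⟩ := hlo (dnSeq A c₀ k)
  obtain ⟨h1, h2, h3⟩ := prv_spec ⟨w, hw, hlt⟩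
  exact ⟨h2, h3⟩

include hc₀ hlo hhi in
lemma enum_strictMono : StrictMono (enum A c₀) := by
  apply strictMono_int_of_lt_succ
  intro z
  rcases le_or_gt 0 z with hz | hz
  · have h1 : (0:ℤ) ≤ z + 1 := by omega
    have h2 : (z+1).toNat = z.toNat + 1 := by omega
    rw [enum, enum, if_pos hz, if_pos h1, h2]
    exact (upSeq_step hc₀ hhi z.toNat).1
  · rcases eq_or_lt_of_le (by omega : z ≤ -1) with hz1 | hz1
    · rw [hz1]
      have : ((-(-1:ℤ)).toNat) = 1 := by norm_num
      rw [enum, enum, if_neg (by omega), if_pos (by omega), this]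
      show dnSeq A c₀ 1 < upSeq A c₀ (0:ℤ).toNat
      have := (dnSeq_step hc₀ hlo 0).1
      simpa [upSeq, dnSeq] using this
    · have h1 : ¬ (0:ℤ) ≤ z := by omega
      have h2 : ¬ (0:ℤ) ≤ z + 1 := by omega
      have h3 : (-z).toNat = (-(z+1)).toNat + 1 := by omega
      rw [enum, enum, if_neg h1, if_neg h2, h3]
      exact (dnSeq_step hc₀ hlo (-(z+1)).toNat).1

include hc₀ hlo hhi in
lemma enum_mem (z : ℤ) : enum A c₀ z ∈ A := by
  rw [enum]
  split
  · exact upSeq_mem hc₀ hhi _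
  · exact dnSeq_mem hc₀ hlo _

include hc₀ hlo hhi in
lemma enum_range : Set.range (enum A c₀) = A := by
  apply Set.eq_of_subset_of_subset
  · rintro x ⟨z, rfl⟩
    exact enum_mem hc₀ hlo hhi z
  · intro v hv
    rcases le_or_gt c₀ v with hle | hlt
    · -- v is reached by upSeq
      have growth : ∀ k : ℕ, c₀ + k ≤ upSeq A c₀ k := by
        intro k
        induction k with
        | zero => simp [upSeq]
        | succ n ih =>
          have := (upSeq_step hc₀ hhi n).1
          push_cast
          omega
      have hex : ∃ k : ℕ, v ≤ upSeq A c₀ k := by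
        refine ⟨(v - c₀).toNat, ?_⟩
        have := growth (v - c₀).toNat
        omega
      have hval : upSeq A c₀ (Nat.find hex) = v := by
        rcases Nat.eq_zero_or_pos (Nat.find hex) with h0 | h0
        · have h1 : v ≤ upSeq A c₀ 0 := by rw [← h0]; exact Nat.find_spec hex
          simp only [upSeq] at h1
          rw [h0]
          simp only [upSeq]
          omega
        · obtain ⟨j, hj⟩ : ∃ j, Nat.find hex = j + 1 := ⟨Nat.find hex - 1, by omega⟩
          have hjmin : ¬ v ≤ upSeq A c₀ j := Nat.find_min hex (by omega)
          push_neg at hjmin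
          have hstep := (upSeq_step hc₀ hhi j).2 v hv hjmin
          have hspec : v ≤ upSeq A c₀ (Nat.find hex) := Nat.find_spec hex
          rw [hj] at hspec ⊢
          omega
      exact ⟨(Nat.find hex : ℤ),
        by rw [enum, if_pos (Int.natCast_nonneg _), Int.toNat_natCast]; exact hval⟩
    · -- v is reached by dnSeq
      have growth : ∀ k : ℕ, dnSeq A c₀ k ≤ c₀ - k := by
        intro k
        induction k with
        | zero => simp [dnSeq]
        | succ n ih =>
          have := (dnSeq_step hc₀ hlo n).1
          push_cast
          omega
      have hex : ∃ k : ℕ, dnSeq A c₀ k ≤ v := by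
        refine ⟨(c₀ - v).toNat, ?_⟩
        have := growth (c₀ - v).toNat
        omega
      have hpos : 0 < Nat.find hex := by
        rcases Nat.eq_zero_or_pos (Nat.find hex) with h0 | h0
        · exfalso
          have h1 : dnSeq A c₀ 0 ≤ v := by rw [← h0]; exact Nat.find_spec hex
          simp only [dnSeq] at h1
          omega
        · exact h0
      have hval : dnSeq A c₀ (Nat.find hex) = v := by
        obtain ⟨j, hj⟩ : ∃ j, Nat.find hex = j + 1 := ⟨Nat.find hex - 1, by omega⟩
        have hjmin : ¬ dnSeq A c₀ j ≤ v := Nat.find_min hex (by omega)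
        push_neg at hjmin
        have hstep := (dnSeq_step hc₀ hlo j).2 v hv hjmin
        have hspec : dnSeq A c₀ (Nat.find hex) ≤ v := Nat.find_spec hex
        rw [hj] at hspec ⊢
        omega
      refine ⟨-(Nat.find hex : ℤ), ?_⟩
      rw [enum, if_neg (by omega), neg_neg, Int.toNat_natCast]
      exact hval

end Enum

lemma prv_range {f : ℤ → ℤ} (hmono : StrictMono f) (i : ℤ) :
    prv (Set.range f) (f i) = f (i - 1) := by
  have h : ∃ w, w ∈ Set.range f ∧ w < f i := ⟨f (i-1), ⟨i-1, rfl⟩, hmono (by omega)⟩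
  obtain ⟨⟨k, hk⟩, h2, h3⟩ := prv_spec h
  have hik : k < i := hmono.lt_iff_lt.mp (hk ▸ h2)
  have := h3 (f (i-1)) ⟨i-1, rfl⟩ (hmono (by omega))
  have h4 : f k ≤ f (i-1) := hmono.le_iff_le.mpr (by omega)
  omega

/-! ### Unboundedness of the outer face -/

lemma outer_unbdd_below {U D : Set (ℤ × ℤ)} (hD : D ⊆ core U) (hloc : LocallyFinite D)
    {m c : ℤ} (hmcU : (m, c) ∈ U) (hmc : m < c)
    (hnocov : ¬ ∃ u' w', (u', w') ∈ D ∧ u' ≤ m ∧ c ≤ w') (N : ℤ) :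
    ∃ v ∈ outerSet D, v < N := by
  by_contra hcon
  push_neg at hcon
  set V := min N m - 1 with hV
  have hcov : ∀ v : ℤ, v ≤ V → ∃ s t, (s, t) ∈ D ∧ s < v ∧ v < t := by
    intro v hv
    by_contra hc
    have hmem : v ∈ outerSet D := hc
    have := hcon v hmem
    omega
  have hT : ∀ v : ℤ, v ≤ V → ∀ s t, (s, t) ∈ D → s < v → v < t → t ≤ m := by
    intro v hv s t hst h1 h2
    by_contra hc
    push_neg at hc
    rcases lt_or_ge t c with h3 | h3
    · exact D_nocross hD hst hmcU (Or.inl ⟨by omega, by omega, h3⟩)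
    · exact hnocov ⟨s, t, hst, by omega, h3⟩
  have hstep : ∀ q : ℤ × ℤ, q ∈ D → q.1 ≤ V → q.1 < q.2 → q.2 ≤ m →
      ∃ q' : ℤ × ℤ, (q' ∈ D ∧ q'.1 ≤ V ∧ q'.1 < q'.2 ∧ q'.2 ≤ m) ∧
        q'.1 < q.1 ∧ q.2 ≤ q'.2 := by
    intro q hq h1 h2 h3
    obtain ⟨s, t, hst, hs1, hs2⟩ := hcov q.1 h1
    have ht : t ≤ m := hT q.1 h1 s t hst hs1 hs2
    have htq : q.2 ≤ t := by
      by_contra hc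
      push_neg at hc
      exact DD_nocross hD hst hq (Or.inl ⟨hs1, hs2, hc⟩)
    exact ⟨(s, t), ⟨hst, by omega, by omega, ht⟩, hs1, htq⟩
  obtain ⟨s₀, t₀, h₀, h₀1, h₀2⟩ := hcov V le_rfl
  have ht₀ : t₀ ≤ m := hT V le_rfl s₀ t₀ h₀ h₀1 h₀2
  let Sub := {q : ℤ × ℤ // q ∈ D ∧ q.1 ≤ V ∧ q.1 < q.2 ∧ q.2 ≤ m}
  let F : Sub → Sub := fun q =>
    ⟨(hstep q.1 q.2.1 q.2.2.1 q.2.2.2.1 q.2.2.2.2).choose,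
      (hstep q.1 q.2.1 q.2.2.1 q.2.2.2.1 q.2.2.2.2).choose_spec.1⟩
  let q₀ : Sub := ⟨(s₀, t₀), h₀, by omega, by omega, ht₀⟩
  let seq : ℕ → Sub := fun k => F^[k] q₀
  have hkey : ∀ k, (seq (k+1)).1.1 < (seq k).1.1 ∧ (seq k).1.2 ≤ (seq (k+1)).1.2 := by
    intro k
    have hit : seq (k+1) = F (seq k) := Function.iterate_succ_apply' F k q₀
    rw [hit]
    exact ⟨(hstep (seq k).1 (seq k).2.1 (seq k).2.2.1 (seq k).2.2.2.1
        (seq k).2.2.2.2).choose_spec.2.1,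
      (hstep (seq k).1 (seq k).2.1 (seq k).2.2.1 (seq k).2.2.2.1
        (seq k).2.2.2.2).choose_spec.2.2⟩
  have hmono2 : ∀ k, t₀ ≤ (seq k).1.2 := by
    intro k
    induction k with
    | zero => exact le_refl _
    | succ n ih => exact ih.trans (hkey n).2
  have hanti : StrictAnti (fun k => (seq k).1.1) :=
    strictAnti_nat_of_succ_lt (fun k => (hkey k).1)
  have hinf : (Set.range (fun k => (seq k).1.1)).Infinite :=
    Set.infinite_range_of_injective hanti.injective
  apply hinf
  have hsub : Set.range (fun k => (seq k).1.1) ⊆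
      ⋃ t ∈ Set.Icc t₀ m, {s : ℤ | (s, t) ∈ D} := by
    rintro x ⟨k, rfl⟩
    refine Set.mem_iUnion₂.mpr ⟨(seq k).1.2, ⟨hmono2 k, (seq k).2.2.2.2⟩, ?_⟩
    show ((seq k).1.1, (seq k).1.2) ∈ D
    have := (seq k).2.1
    rwa [Prod.mk.eta]
  exact Set.Finite.subset (Set.Finite.biUnion (Set.finite_Icc _ _)
    (fun t _ => (hloc t).subset (fun s hs => Or.inl hs))) hsub

lemma outer_unbdd_above {U D : Set (ℤ × ℤ)} (hD : D ⊆ core U) (hloc : LocallyFinite D)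
    {m c : ℤ} (hmcU : (m, c) ∈ U) (hmc : m < c)
    (hnocov : ¬ ∃ u' w', (u', w') ∈ D ∧ u' ≤ m ∧ c ≤ w') (N : ℤ) :
    ∃ v ∈ outerSet D, N < v := by
  by_contra hcon
  push_neg at hcon
  set V := max N c + 1 with hV
  have hcov : ∀ v : ℤ, V ≤ v → ∃ s t, (s, t) ∈ D ∧ s < v ∧ v < t := by
    intro v hv
    by_contra hc
    have hmem : v ∈ outerSet D := hc
    have := hcon v hmem
    omega
  have hT : ∀ v : ℤ, V ≤ v → ∀ s t, (s, t) ∈ D → s < v → v < t → c ≤ s := by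
    intro v hv s t hst h1 h2
    by_contra hc
    push_neg at hc
    rcases le_or_gt s m with h3 | h3
    · exact hnocov ⟨s, t, hst, h3, by omega⟩
    · exact D_nocross hD hst hmcU (Or.inr ⟨h3, hc, by omega⟩)
  have hstep : ∀ q : ℤ × ℤ, q ∈ D → c ≤ q.1 → q.1 < q.2 → V ≤ q.2 →
      ∃ q' : ℤ × ℤ, (q' ∈ D ∧ c ≤ q'.1 ∧ q'.1 < q'.2 ∧ V ≤ q'.2) ∧
        q.2 < q'.2 ∧ q'.1 ≤ q.1 := by
    intro q hq h1 h2 h3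
    obtain ⟨s, t, hst, hs1, hs2⟩ := hcov q.2 h3
    have hs : c ≤ s := hT q.2 h3 s t hst hs1 hs2
    have hsq : s ≤ q.1 := by
      by_contra hc
      push_neg at hc
      exact DD_nocross hD hq hst (Or.inl ⟨hc, hs1, hs2⟩)
    exact ⟨(s, t), ⟨hst, hs, by omega, by omega⟩, hs2, hsq⟩
  obtain ⟨s₀, t₀, h₀, h₀1, h₀2⟩ := hcov V le_rfl
  have hs₀ : c ≤ s₀ := hT V le_rfl s₀ t₀ h₀ h₀1 h₀2
  let Sub := {q : ℤ × ℤ // q ∈ D ∧ c ≤ q.1 ∧ q.1 < q.2 ∧ V ≤ q.2}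
  let F : Sub → Sub := fun q =>
    ⟨(hstep q.1 q.2.1 q.2.2.1 q.2.2.2.1 q.2.2.2.2).choose,
      (hstep q.1 q.2.1 q.2.2.1 q.2.2.2.1 q.2.2.2.2).choose_spec.1⟩
  let q₀ : Sub := ⟨(s₀, t₀), h₀, hs₀, by omega, by omega⟩
  let seq : ℕ → Sub := fun k => F^[k] q₀
  have hkey : ∀ k, (seq k).1.2 < (seq (k+1)).1.2 ∧ (seq (k+1)).1.1 ≤ (seq k).1.1 := by
    intro k
    have hit : seq (k+1) = F (seq k) := Function.iterate_succ_apply' F k q₀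
    rw [hit]
    exact ⟨(hstep (seq k).1 (seq k).2.1 (seq k).2.2.1 (seq k).2.2.2.1
        (seq k).2.2.2.2).choose_spec.2.1,
      (hstep (seq k).1 (seq k).2.1 (seq k).2.2.1 (seq k).2.2.2.1
        (seq k).2.2.2.2).choose_spec.2.2⟩
  have hmono2 : ∀ k, (seq k).1.1 ≤ s₀ := by
    intro k
    induction k with
    | zero => exact le_refl _
    | succ n ih => exact ((hkey n).2).trans ih
  have hanti : StrictMono (fun k => (seq k).1.2) :=
    strictMono_nat_of_lt_succ (fun k => (hkey k).1)
  have hinf : (Set.range (fun k => (seq k).1.2)).Infinite :=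
    Set.infinite_range_of_injective hanti.injective
  apply hinf
  have hsub : Set.range (fun k => (seq k).1.2) ⊆
      ⋃ s ∈ Set.Icc c s₀, {t : ℤ | (s, t) ∈ D} := by
    rintro x ⟨k, rfl⟩
    refine Set.mem_iUnion₂.mpr ⟨(seq k).1.1, ⟨(seq k).2.2.1, hmono2 k⟩, ?_⟩
    show ((seq k).1.1, (seq k).1.2) ∈ D
    have := (seq k).2.1
    rwa [Prod.mk.eta]
  exact Set.Finite.subset (Set.Finite.biUnion (Set.finite_Icc _ _)
    (fun s _ => (hloc s).subset (fun t ht => Or.inr ht))) hsub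

/-! ### The uncovered case -/

lemma uncovered_case {U D : Set (ℤ × ℤ)} (hU : IsPtolemy U) (hD : D ⊆ core U)
    (hDf : LocallyFinite D ∨ HasFountain D)
    {m n c : ℤ} (hmn : m < n) (hnc : n < c) (hmcU : (m, c) ∈ U)
    (hcedge : c = n + 1 ∨ (n, c) ∈ D) (houter : ∀ z, z < n → (z, c) ∉ D)
    (hnocov : ¬ ∃ u' w', (u', w') ∈ D ∧ u' ≤ m ∧ c ≤ w') :
    ∃ v, v < m ∧ (v = m - 1 ∨ (v, m) ∈ D) ∧ (v, n) ∈ mutation U D := by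
  have hmc : m < c := by omega
  -- local finiteness holds, since in the fountain case every arc is covered
  have hloc : LocallyFinite D := by
    rcases hDf with h | ⟨n₀, hL, hR⟩
    · exact h
    · exfalso
      have harcL : ∀ x ∈ {m' : ℤ | (m', n₀) ∈ D}, x ≤ n₀ := fun x hx => by
        have := D_arc hU hD hx; omega
      have harcR : ∀ x ∈ {p : ℤ | (n₀, p) ∈ D}, n₀ ≤ x := fun x hx => by
        have := D_arc hU hD hx; omega
      rcases le_or_gt c n₀ with h1 | h1
      · obtain ⟨mi, hmi, hmilt⟩ := exists_lt_of_infinite hL harcL m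
        exact hnocov ⟨mi, n₀, hmi, by omega, h1⟩
      · rcases lt_or_ge m n₀ with h2 | h2
        · obtain ⟨mi, hmi, hmilt⟩ := exists_lt_of_infinite hL harcL m
          exact D_nocross hD hmi hmcU (Or.inl ⟨hmilt, h2, h1⟩)
        · obtain ⟨pj, hpj, hpjlt⟩ := exists_gt_of_infinite hR harcR c
          exact hnocov ⟨n₀, pj, hpj, h2, by omega⟩
  -- m, n and c lie in the outer face
  have hmA : m ∈ outerSet D := by
    rintro ⟨s, t, hst, h1, h2⟩
    rcases lt_or_ge t c with h3 | h3
    · exact D_nocross hD hst hmcU (Or.inl ⟨h1, h2, h3⟩)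
    · exact hnocov ⟨s, t, hst, by omega, h3⟩
  have hnA : n ∈ outerSet D := by
    rintro ⟨s, t, hst, h1, h2⟩
    rcases lt_or_ge t c with h3 | h3
    · rcases hcedge with he | hncD
      · omega
      · exact DD_nocross hD hncD hst (Or.inr ⟨h1, h2, h3⟩)
    · rcases lt_or_ge s m with h4 | h4
      · exact hnocov ⟨s, t, hst, by omega, h3⟩
      rcases eq_or_lt_of_le h4 with h4' | h4'
      · exact hnocov ⟨s, t, hst, by omega, h3⟩
      · rcases eq_or_lt_of_le h3 with h3' | h3'
        · exact houter s (by omega) (by rw [h3']; exact hst)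
        · exact D_nocross hD hst hmcU (Or.inr ⟨h4', by omega, h3'⟩)
  have hcA : c ∈ outerSet D := by
    rintro ⟨s, t, hst, h1, h2⟩
    rcases le_or_gt s m with h4 | h4
    · exact hnocov ⟨s, t, hst, h4, by omega⟩
    rcases lt_or_ge s n with h5 | h5
    · exact D_nocross hD hst hmcU (Or.inr ⟨h4, h1, h2⟩)
    rcases eq_or_lt_of_le h5 with h5' | h5'
    · exact D_nocross hD hst hmcU (Or.inr ⟨by omega, h1, h2⟩)
    · rcases hcedge with he | hncD
      · omega
      · exact DD_nocross hD hncD hst (Or.inl ⟨h5', h1, h2⟩)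
  -- no element of the outer face lies strictly between n and c
  have hgapnc : ∀ x ∈ outerSet D, ¬ (n < x ∧ x < c) := by
    rintro x hx ⟨h1, h2⟩
    rcases hcedge with he | hncD
    · omega
    · exact hx ⟨n, c, hncD, h1, h2⟩
  obtain ⟨hlo, hhi⟩ : (∀ N : ℤ, ∃ v ∈ outerSet D, v < N) ∧
      (∀ N : ℤ, ∃ v ∈ outerSet D, N < v) :=
    ⟨outer_unbdd_below hD hloc hmcU hmc hnocov,
     outer_unbdd_above hD hloc hmcU hmc hnocov⟩
  set A := outerSet D with hA
  set f := enum A c with hf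
  have hmono : StrictMono f := enum_strictMono hcA hlo hhi
  have hrange : Set.range f = A := enum_range hcA hlo hhi
  -- f is an infinite cell
  have hcell : IsInfiniteCell D f := by
    refine ⟨hmono, ?_, ?_⟩
    · intro t
      have ht : f t ∈ A := enum_mem hcA hlo hhi t
      have ht1 : f (t+1) ∈ A := enum_mem hcA hlo hhi (t+1)
      have hlt : f t < f (t+1) := hmono (by omega)
      have hcons : ∀ x ∈ A, ¬ (f t < x ∧ x < f (t+1)) := by
        intro x hx ⟨l1, l2⟩
        rw [← hrange] at hx
        obtain ⟨s, rfl⟩ := hx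
        have := hmono.lt_iff_lt.mp l1
        have := hmono.lt_iff_lt.mp l2
        omega
      by_cases he : f (t+1) = f t + 1
      · exact Or.inl he
      · exact Or.inr (outer_gap hD ht ht1 hlt hcons he)
    · intro k l hkl hmemD
      have hk1 : f (k+1) ∈ A := enum_mem hcA hlo hhi (k+1)
      exact hk1 ⟨f k, f l, hmemD, hmono (by omega), hmono (by omega)⟩
  -- indices
  obtain ⟨i, hfi⟩ : m ∈ Set.range f := hrange.symm ▸ hmA
  obtain ⟨j, hfj⟩ : c ∈ Set.range f := hrange.symm ▸ hcA
  obtain ⟨j', hfj'⟩ : n ∈ Set.range f := hrange.symm ▸ hnA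
  have hij' : i < j' := hmono.lt_iff_lt.mp (by rw [hfi, hfj']; exact hmn)
  have hj'j : j' < j := hmono.lt_iff_lt.mp (by rw [hfj', hfj]; exact hnc)
  -- f (j - 1) = n
  have hprvc : f (j - 1) = n := by
    have h1 : prv (Set.range f) (f j) = f (j-1) := prv_range hmono j
    have h2 : prv A c = n := by
      obtain ⟨p1, p2, p3⟩ := prv_spec (C := A) (v := c) ⟨n, hnA, hnc⟩
      have l1 : n ≤ prv A c := p3 n hnA hnc
      rcases eq_or_lt_of_le l1 with h | h
      · exact h.symm
      · exact absurd ⟨h, p2⟩ (hgapnc _ p1)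
    rw [← h1, hrange, hfj, h2]
  have hprvm : f (i - 1) = prv A m := by
    have h1 : prv (Set.range f) (f i) = f (i-1) := prv_range hmono i
    rw [← h1, hrange, hfi]
  refine ⟨f (i - 1), ?_, ?_, ?_⟩
  · have := hmono (show i - 1 < i by omega)
    omega
  · rcases hcell.2.1 (i - 1) with he | hd
    · left
      rw [IsEdge] at he
      rw [show i - 1 + 1 = i by ring, hfi] at he
      omega
    · right
      rwa [show i - 1 + 1 = i by ring, hfi] at hd
  · refine Or.inr ⟨f, hcell, i, j, by omega, by rw [hfi, hfj]; exact hmcU, ?_⟩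
    rw [hprvc]

/-! ### Witness data for arcs of the mutation starting at `n` -/

def NormAt (U D : Set (ℤ × ℤ)) (n c p : ℤ) : Prop :=
  ∃ C : Set ℤ, IsCellSet D C ∧ n ∈ C ∧ c ∈ C ∧ (∀ u ∈ C, ¬(n < u ∧ u < c)) ∧
    ∃ b ∈ C, (c, b) ∈ U ∧ c < b ∧ p < b

def WrapAt (U D : Set (ℤ × ℤ)) (n c m₀ p : ℤ) : Prop :=
  ∃ S : Finset ℤ, IsFiniteCell D S ∧ n ∈ S ∧ c ∈ S ∧
    (∀ u ∈ (S : Set ℤ), ¬(n < u ∧ u < c)) ∧ m₀ ∈ S ∧ p ∈ S ∧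
    (∀ u ∈ S, m₀ ≤ u ∧ u ≤ p) ∧ c < p ∧ (m₀, p) ∈ D

lemma img_data {U D : Set (ℤ × ℤ)} (hU : IsPtolemy U) (hD : D ⊆ core U) {n p : ℤ}
    (hp : (n, p) ∈ mutation U D) :
    (n, p) ∈ D ∨ ∃ c, n < c ∧ (c = n + 1 ∨ (n, c) ∈ D) ∧
      (NormAt U D n c p ∨ ∃ m₀, (m₀, c) ∈ U ∧ m₀ ≤ n ∧ WrapAt U D n c m₀ p) := by
  rcases hp with (hd | hfin) | hinf
  · exact Or.inl hd
  · right
    obtain ⟨S, hS, α, β, horig, hint, hpe⟩ := hfin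
    have hne := hS.1
    obtain ⟨hαS, hβS, hαβ, hnbd⟩ := hint
    have hβm : S.min' hne < β := lt_of_le_of_lt (S.min'_le α hαS) hαβ
    obtain ⟨hpβ1, hpβ2, hpβ3⟩ := prv_spec (C := (S : Set ℤ)) (v := β)
      ⟨S.min' hne, Finset.mem_coe.mpr (S.min'_mem hne), hβm⟩
    by_cases hαm : α = S.min' hne
    · -- wrap image
      have hβM : β ≠ S.max' hne := by
        intro h
        exact hnbd ⟨hαS, hβS, hαβ, Or.inr (fun x hx =>
          ⟨hαm ▸ S.min'_le x hx, h ▸ S.le_max' x hx⟩)⟩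
      have hβM' : β < S.max' hne := lt_of_le_of_ne (S.le_max' β hβS) hβM
      have hpairs : ordPair (cellPred S α) (cellPred S β) = (prv (S:Set ℤ) β, S.max' hne) := by
        rw [cellPred_eq_prv hne, cellPred_eq_prv hne, hαm, prv_min hne, ordPair,
          min_eq_right (by omega), max_eq_left (by omega)]
      rw [hpairs, Prod.mk.injEq] at hpe
      obtain ⟨hn', hp'⟩ := hpe
      have hnS : n ∈ S := by rw [hn']; exact Finset.mem_coe.mp hpβ1
      have hcons : ∀ u ∈ (S : Set ℤ), ¬ (n < u ∧ u < β) := by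
        rintro u hu ⟨l1, l2⟩
        have := hpβ3 u hu l2
        omega
      have hedge : β = n + 1 ∨ (n, β) ∈ D := by
        have hbdry : CellBoundaryPair S n β := ⟨hnS, hβS, by omega,
          Or.inl (fun u hu hh => hcons u (Finset.mem_coe.mpr hu) hh)⟩
        rcases hS.2.1 n β hbdry with he | hd
        · left; rw [IsEdge] at he; omega
        · right; exact hd
      refine ⟨β, by omega, hedge, Or.inr ⟨α, horig, by
          have := S.min'_le n hnS; omega, S, hS, hnS, hβS, hcons,
        hαm ▸ S.min'_mem hne, hp' ▸ S.max'_mem hne, ?_, by omega, ?_⟩⟩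
      · intro u hu
        rw [hαm, hp']
        exact ⟨S.min'_le u hu, S.le_max' u hu⟩
      · have hbdry : CellBoundaryPair S α (S.max' hne) := ⟨hαS, S.max'_mem hne,
          by omega, Or.inr (fun x hx => ⟨hαm ▸ S.min'_le x hx, S.le_max' x hx⟩)⟩
        rcases hS.2.1 _ _ hbdry with he | hd
        · rw [IsEdge] at he
          rw [hαm] at hαβ
          omega
        · rw [hp']
          rw [hαm]
          rw [hαm] at hd
          exact hd
    · -- regular image
      have hmα : S.min' hne < α := lt_of_le_of_ne (S.min'_le α hαS) (Ne.symm hαm)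
      obtain ⟨hpα1, hpα2, hpα3⟩ := prv_spec (C := (S : Set ℤ)) (v := α)
        ⟨S.min' hne, Finset.mem_coe.mpr (S.min'_mem hne), hmα⟩
      have hαpβ : α ≤ prv (S : Set ℤ) β := hpβ3 α (Finset.mem_coe.mpr hαS) hαβ
      have hpairs : ordPair (cellPred S α) (cellPred S β) =
          (prv (S:Set ℤ) α, prv (S:Set ℤ) β) := by
        rw [cellPred_eq_prv hne, cellPred_eq_prv hne, ordPair,
          min_eq_left (by omega), max_eq_right (by omega)]
      rw [hpairs, Prod.mk.injEq] at hpe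
      obtain ⟨hn', hp'⟩ := hpe
      have hnS : n ∈ (S : Set ℤ) := by rw [hn']; exact hpα1
      have hcons : ∀ u ∈ (S : Set ℤ), ¬ (n < u ∧ u < α) := by
        rintro u hu ⟨l1, l2⟩
        have := hpα3 u hu l2
        omega
      have hedge : α = n + 1 ∨ (n, α) ∈ D := by
        have hbdry : CellBoundaryPair S n α := ⟨Finset.mem_coe.mp hnS, hαS, by omega,
          Or.inl (fun u hu hh => hcons u (Finset.mem_coe.mpr hu) hh)⟩
        rcases hS.2.1 n α hbdry with he | hd
        · left; rw [IsEdge] at he; omega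
        · right; exact hd
      exact ⟨α, by omega, hedge, Or.inl ⟨(S : Set ℤ), cellSet_of_finite hS, hnS,
        Finset.mem_coe.mpr hαS, hcons, β, Finset.mem_coe.mpr hβS, horig, hαβ, by omega⟩⟩
  · right
    obtain ⟨f, hf, k, l, hkl, horig, hpe⟩ := hinf
    have hmono := hf.1
    rw [Prod.mk.injEq] at hpe
    obtain ⟨hn', hp'⟩ := hpe
    have hcons : ∀ u ∈ Set.range f, ¬ (n < u ∧ u < f k) := by
      rintro u ⟨s, rfl⟩ ⟨l1, l2⟩
      rw [hn'] at l1
      have := hmono.lt_iff_lt.mp l1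
      have := hmono.lt_iff_lt.mp l2
      omega
    have hedge : f k = n + 1 ∨ (n, f k) ∈ D := by
      rcases hf.2.1 (k - 1) with he | hd
      · left
        rw [IsEdge, show k - 1 + 1 = k by ring] at he
        omega
      · right
        rw [show k - 1 + 1 = k by ring] at hd
        rw [hn']
        exact hd
    have hnfk : n < f k := by rw [hn']; exact hmono (by omega)
    exact ⟨f k, hnfk, hedge, Or.inl ⟨Set.range f, cellSet_of_infinite hf, hn' ▸ ⟨k-1, rfl⟩,
      ⟨k, rfl⟩, hcons, f l, ⟨l, rfl⟩, horig, hmono (by omega), by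
        rw [hp']; exact hmono (by omega)⟩⟩

/-! ### The fountain condition for the mutation -/

lemma mutation_fountain {U D : Set (ℤ × ℤ)} (hU : IsPtolemy U) (hD : D ⊆ core U)
    (hDf : LocallyFinite D ∨ HasFountain D) :
    ∀ n : ℤ, IsRightFountain (mutation U D) n → IsLeftFountain (mutation U D) n := by
  intro n hRF
  by_cases hDn : {p : ℤ | (n, p) ∈ D}.Infinite
  · rcases hDf with hloc | ⟨n₀, hL, hR⟩
    · exact absurd (Set.Finite.subset (hloc n) (fun p hp => Or.inr hp)) hDn
    · have hn : n = n₀ := right_fountain_eq hU hD hL hR hDn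
      subst hn
      exact Set.Infinite.mono (fun m hm => Or.inl (Or.inl hm)) hL
  have hDfin : {p : ℤ | (n, p) ∈ D}.Finite := Set.not_infinite.mp hDn
  have hCfin : {c : ℤ | n < c ∧ (c = n + 1 ∨ (n, c) ∈ D)}.Finite := by
    refine Set.Finite.subset (hDfin.union (Set.finite_singleton (n + 1))) ?_
    rintro c ⟨h1, h2 | h2⟩
    · exact Or.inr (by simpa using h2)
    · exact Or.inl h2
  set P := {p : ℤ | (n, p) ∈ mutation U D} \ {p : ℤ | (n, p) ∈ D} with hPdef
  have hPinf : P.Infinite := hRF.diff hDfin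
  have hPsub : P ⊆ ⋃ c ∈ {c : ℤ | n < c ∧ (c = n + 1 ∨ (n, c) ∈ D)},
      {p : ℤ | NormAt U D n c p ∨ ∃ m₀, (m₀, c) ∈ U ∧ m₀ ≤ n ∧ WrapAt U D n c m₀ p} := by
    rintro p ⟨hp1, hp2⟩
    rcases img_data hU hD hp1 with hd | ⟨c, h1, h2, h3⟩
    · exact absurd hd hp2
    · exact Set.mem_iUnion₂.mpr ⟨c, ⟨h1, h2⟩, h3⟩
  obtain ⟨c₁, hc₁C, hc₁inf⟩ := infinite_pigeonhole hPinf hCfin hPsub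
  obtain ⟨hnc₁, hcedge₁⟩ := hc₁C
  -- the outermost property of (n, c₁)
  have houter : ∀ z, z < n → (z, c₁) ∉ D := by
    intro z hz hzD
    obtain ⟨p₀, hp₀P, hp₀data⟩ := hc₁inf.nonempty
    rcases hp₀data with ⟨C, hC, hnC, hcC, hcons, b, hbC, hbU, hcb, hpb⟩ |
      ⟨m₀, hm₀U, hm₀n, S, hS, hnS, hcS, hcons, hm₀S, hpS, hbds, hcp, hmpD⟩
    · exact outermost hU hD hC hnC hcC hnc₁ hcons ⟨b, hbC, hcb⟩ hz hzD
    · exact outermost hU hD (cellSet_of_finite hS) (Finset.mem_coe.mpr hnS)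
        (Finset.mem_coe.mpr hcS) hnc₁ hcons
        ⟨p₀, Finset.mem_coe.mpr hpS, hcp⟩ hz hzD
  -- split into the normal and wrapped families
  have hsplit : (P ∩ {p : ℤ | NormAt U D n c₁ p}).Infinite ∨
      (P ∩ {p : ℤ | ∃ m₀, (m₀, c₁) ∈ U ∧ m₀ ≤ n ∧ WrapAt U D n c₁ m₀ p}).Infinite := by
    by_contra hcon
    push_neg at hcon
    obtain ⟨h1, h2⟩ := hcon
    try rw [Set.not_infinite] at h1 h2
    refine hc₁inf (Set.Finite.subset (h1.union h2) ?_)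
    rintro p ⟨hp1, hp2 | hp2⟩
    · exact Or.inl ⟨hp1, hp2⟩
    · exact Or.inr ⟨hp1, hp2⟩
  -- in either case, c₁ is a left fountain of U
  have hULF : {m : ℤ | (m, c₁) ∈ U}.Infinite := by
    rcases hsplit with hN | hW
    · have hbinf : {b : ℤ | (c₁, b) ∈ U}.Infinite := by
        by_contra hfin
        rw [Set.not_infinite] at hfin
        obtain ⟨B, hB⟩ := hfin.bddAbove
        refine hN (Set.Finite.subset (Set.finite_Ioo n B) ?_)
        rintro p ⟨hp1, C, hC, hnC, hcC, hcons, b, hbC, hbU, hcb, hpb⟩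
        have harc : n + 2 ≤ p := mutation_arc hU hD (n, p) hp1.1
        exact ⟨by omega, lt_of_lt_of_le hpb (hB hbU)⟩
      exact hU.2.2 c₁ hbinf
    · by_cases hm0 : {m₀ : ℤ | (m₀, c₁) ∈ U ∧ m₀ ≤ n}.Infinite
      · exact hm0.mono (fun x hx => hx.1)
      · exfalso
        have hm0fin : {m₀ : ℤ | (m₀, c₁) ∈ U ∧ m₀ ≤ n}.Finite := Set.not_infinite.mp hm0
        have hWsub : (P ∩ {p : ℤ | ∃ m₀, (m₀, c₁) ∈ U ∧ m₀ ≤ n ∧ WrapAt U D n c₁ m₀ p}) ⊆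
            ⋃ m₀ ∈ {m₀ : ℤ | (m₀, c₁) ∈ U ∧ m₀ ≤ n}, {p : ℤ | WrapAt U D n c₁ m₀ p} := by
          rintro p ⟨hp1, m₀, h1, h2, h3⟩
          exact Set.mem_iUnion₂.mpr ⟨m₀, ⟨h1, h2⟩, h3⟩
        obtain ⟨m₁, hm₁mem, hm₁inf⟩ := infinite_pigeonhole hW hm0fin hWsub
        obtain ⟨p₁, hp₁, p₂, hp₂, hpne⟩ := hm₁inf.nontrivial
        -- wlog p₁ < p₂
        have key : ∀ q₁ q₂ : ℤ, q₁ < q₂ → WrapAt U D n c₁ m₁ q₁ →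
            WrapAt U D n c₁ m₁ q₂ → False := by
          intro q₁ q₂ hq12 ⟨S₁, hS₁, hnS₁, hcS₁, hcons₁, hmS₁, hpS₁, hbds₁, hcp₁, hmpD₁⟩
            ⟨S₂, hS₂, hnS₂, hcS₂, hcons₂, hmS₂, hpS₂, hbds₂, hcp₂, hmpD₂⟩
          have hm₁n : m₁ ≤ n := (hbds₁ n hnS₁).1
          by_cases hq₁S₂ : q₁ ∈ S₂
          · refine hS₂.2.2 m₁ hmS₂ q₁ hq₁S₂ (by omega) ?_ hmpD₁
            rintro ⟨-, -, -, hcase | hcase⟩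
            · exact hcase c₁ hcS₂ ⟨by omega, hcp₁⟩
            · exact absurd ((hcase q₂ hpS₂).2) (not_le.mpr hq12)
          · obtain ⟨s, hsC, s', hs'C, hs1, hs2, hnb, hssD⟩ :=
              gap_of_not_mem (cellSet_of_finite hS₂) (Finset.mem_coe.mpr hcS₂)
              (Finset.mem_coe.mpr hpS₂) hcp₁ hq12 (fun h => hq₁S₂ (Finset.mem_coe.mp h))
            have hcs : c₁ ≤ s := by
              by_contra hcon
              exact hnb c₁ (Finset.mem_coe.mpr hcS₂) ⟨by omega, by omega⟩
            exact DD_nocross hD hmpD₁ hssD (Or.inl ⟨by omega, hs1, hs2⟩)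
        rcases lt_trichotomy p₁ p₂ with h | h | h
        · exact key p₁ p₂ h hp₁.2 hp₂.2
        · exact hpne h
        · exact key p₂ p₁ h hp₂.2 hp₁.2
  -- filter down to good left-fountain members
  have hDmfin : {m : ℤ | (m, c₁) ∈ D}.Finite := by
    by_contra hinf
    have hinf' : {m : ℤ | (m, c₁) ∈ D}.Infinite := hinf
    rcases hDf with hloc | ⟨n₀, hL, hR⟩
    · exact absurd (Set.Finite.subset (hloc c₁) (fun m hm => Or.inl hm)) hinf
    · have hc₁n₀ : c₁ = n₀ := left_fountain_eq hU hD hL hR hinf'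
      have hbd : ∀ x ∈ {m : ℤ | (m, c₁) ∈ D}, x ≤ c₁ := fun x hx => by
        have := D_arc hU hD hx; omega
      obtain ⟨z, hz, hzlt⟩ := exists_lt_of_infinite hinf' hbd n
      exact houter z hzlt hz
  have hG : ({m : ℤ | (m, c₁) ∈ U} \ (Set.Icc n c₁ ∪ {m : ℤ | (m, c₁) ∈ D})).Infinite :=
    hULF.diff ((Set.finite_Icc n c₁).union hDmfin)
  set G := {m : ℤ | (m, c₁) ∈ U} \ (Set.Icc n c₁ ∪ {m : ℤ | (m, c₁) ∈ D}) with hGdef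
  have hGfacts : ∀ m ∈ G, (m, c₁) ∈ U ∧ m < n ∧ (m, c₁) ∉ D := by
    rintro m ⟨h1, h2⟩
    refine ⟨h1, ?_, fun hd => h2 (Or.inr hd)⟩
    have harc := hU.1 _ h1
    simp only [IsArc] at harc
    by_contra hcon
    push_neg at hcon
    exact h2 (Or.inl ⟨hcon, by omega⟩)
  -- at most one bad member
  set Bad := {m : ℤ | ∃ w, (m, w) ∈ D ∧ c₁ ≤ w} with hBadDef
  have hBadsub : (G ∩ Bad).Subsingleton := by
    rintro m₁ ⟨hm₁G, w₁, hw₁, hcw₁⟩ m₂ ⟨hm₂G, w₂, hw₂, hcw₂⟩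
    obtain ⟨hU₁, hn₁, hD₁⟩ := hGfacts m₁ hm₁G
    obtain ⟨hU₂, hn₂, hD₂⟩ := hGfacts m₂ hm₂G
    by_contra hne
    have hw₂c : c₁ < w₂ := by
      rcases eq_or_lt_of_le hcw₂ with h | h
      · exact absurd (h ▸ hw₂) hD₂
      · exact h
    have hw₁c : c₁ < w₁ := by
      rcases eq_or_lt_of_le hcw₁ with h | h
      · exact absurd (h ▸ hw₁) hD₁
      · exact h
    rcases lt_or_gt_of_ne hne with h | h
    · exact D_nocross hD hw₂ hU₁ (Or.inr ⟨h, by omega, hw₂c⟩)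
    · exact D_nocross hD hw₁ hU₂ (Or.inr ⟨h, by omega, hw₁c⟩)
  have hG' : (G \ Bad).Infinite := by
    have h1 : (G \ (G ∩ Bad)).Infinite := hG.diff hBadsub.finite
    refine Set.Infinite.mono ?_ h1
    rintro m ⟨h2, h3⟩
    exact ⟨h2, fun hb => h3 ⟨h2, hb⟩⟩
  -- each good member produces an arc of the mutation ending at n
  have hkey : ∀ m ∈ G \ Bad, ∃ v, v < m ∧ (v = m - 1 ∨ (v, m) ∈ D) ∧
      (v, n) ∈ mutation U D := by
    rintro m ⟨hmG, hmBad⟩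
    obtain ⟨hmU, hmn, hmD⟩ := hGfacts m hmG
    by_cases hcov : ∃ u' w', (u', w') ∈ D ∧ u' ≤ m ∧ c₁ ≤ w'
    · obtain ⟨u, w, huw, hum, hcw, hmin⟩ := exists_min_cover hD (by omega) hcov
      have hune : u ≠ m := by
        intro h
        exact hmBad ⟨w, h ▸ huw, hcw⟩
      exact covered_case hU hD hmn hnc₁ hmU hmD hcedge₁ houter huw hum hcw hmin hune
    · exact uncovered_case hU hD hDf hmn hnc₁ hmU hcedge₁ houter hcov
  -- conclude
  show {m : ℤ | (m, n) ∈ mutation U D}.Infinite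
  by_contra hfin
  rw [Set.not_infinite] at hfin
  refine hG' (Set.Finite.subset (Set.Finite.biUnion hfin
    (fun v _ => Set.Finite.subset (Set.finite_Ioo v n)
      (fun m (hm : v < m ∧ m < n ∧ (v = m - 1 ∨ (v, m) ∈ D)) => ⟨hm.1, hm.2.1⟩))) ?_)
  intro m hm
  obtain ⟨v, hv1, hv2, hv3⟩ := hkey m hm
  obtain ⟨-, hmn, -⟩ := hGfacts m hm.1
  exact Set.mem_iUnion₂.mpr ⟨v, hv3, hv1, by omega, hv2⟩

/-- if `U` is a Ptolemy diagram of the ∞-gon and `D ⊆ I(U)` is locally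
finite or has a fountain, then the `D`-mutation of `U` is again a Ptolemy diagram. -/
theorem stmt19 (U D : Set (ℤ × ℤ)) (hU : IsPtolemy U) (hD : D ⊆ core U)
    (hDf : LocallyFinite D ∨ HasFountain D) :
    IsPtolemy (mutation U D) :=
  ⟨mutation_arc hU hD, mutation_ptolemy hU hD, mutation_fountain hU hD hDf⟩

end InfinityGonPtolemy
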